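/- arXiv:1106.5149 — 10 statements merged into one kernel-verified Lean document; each statement's English description precedes it below -/
import Mathlib

section
/- Let n be an odd prime and r, s integers with s ≥ 1, 4s − r² > 0, 4s − r² not a perfect square, and n not dividing s·(4s − r²). Let λ and μ be integers with λ² + rλ + s ≡ 0 (mod n) and μ² + 1 ≡ 0 (mod n), and let K = {(x₁,x₂,x₃,x₄) ∈ ℤ⁴ : n divides x₁ + λx₂ + μx₃ + λμx₄}. Then there exist four vectors v₁, v₂, v₃, v₄ ∈ K that are linearly independent over ℚ and whose rectangle norms all are < 51.5·√(1 + |r| + s)·n^(1/4). -/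
/-- Pigeonhole: a nonzero kernel vector in a weighted box. -/
lemma glv_pigeonhole (n : ℕ) (hn : 0 < n) (lam mu : ℤ) (A B : ℕ)
    (h : n < (A + 1) ^ 2 * (B + 1) ^ 2) :
    ∃ x1 x2 x3 x4 : ℤ, ¬(x1 = 0 ∧ x2 = 0 ∧ x3 = 0 ∧ x4 = 0) ∧
      |x1| ≤ A ∧ |x2| ≤ B ∧ |x3| ≤ A ∧ |x4| ≤ B ∧
      (n : ℤ) ∣ x1 + lam * x2 + mu * x3 + lam * mu * x4 := by
  haveI : NeZero n := ⟨hn.ne'⟩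
  set f : Fin (A + 1) × Fin (B + 1) × Fin (A + 1) × Fin (B + 1) → ZMod n :=
    fun p => (((p.1 : ℤ) + lam * (p.2.1 : ℤ) + mu * (p.2.2.1 : ℤ)
      + lam * mu * (p.2.2.2 : ℤ) : ℤ) : ZMod n) with hf
  have hcard : Fintype.card (ZMod n)
      < Fintype.card (Fin (A + 1) × Fin (B + 1) × Fin (A + 1) × Fin (B + 1)) := by
    simp only [ZMod.card, Fintype.card_prod, Fintype.card_fin]
    nlinarith [h]
  obtain ⟨p, q, hpq, hfeq⟩ := Fintype.exists_ne_map_eq_of_card_lt f hcard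
  refine ⟨(p.1 : ℤ) - (q.1 : ℤ), (p.2.1 : ℤ) - (q.2.1 : ℤ),
    (p.2.2.1 : ℤ) - (q.2.2.1 : ℤ), (p.2.2.2 : ℤ) - (q.2.2.2 : ℤ), ?_, ?_, ?_, ?_, ?_, ?_⟩
  · rintro ⟨h1, h2, h3, h4⟩
    apply hpq
    have e1 : p.1 = q.1 := by ext; omega
    have e2 : p.2.1 = q.2.1 := by ext; omega
    have e3 : p.2.2.1 = q.2.2.1 := by ext; omega
    have e4 : p.2.2.2 = q.2.2.2 := by ext; omega
    exact Prod.ext e1 (Prod.ext e2 (Prod.ext e3 e4))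
  · have := p.1.isLt; have := q.1.isLt; rw [abs_le]; omega
  · have := p.2.1.isLt; have := q.2.1.isLt; rw [abs_le]; omega
  · have := p.2.2.1.isLt; have := q.2.2.1.isLt; rw [abs_le]; omega
  · have := p.2.2.2.isLt; have := q.2.2.2.isLt; rw [abs_le]; omega
  · have hsub : (((((p.1 : ℤ) + lam * (p.2.1 : ℤ) + mu * (p.2.2.1 : ℤ)
        + lam * mu * (p.2.2.2 : ℤ)) - ((q.1 : ℤ) + lam * (q.2.1 : ℤ) + mu * (q.2.2.1 : ℤ)
        + lam * mu * (q.2.2.2 : ℤ))) : ℤ) : ZMod n) = 0 := by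
      push_cast
      rw [hf] at hfeq
      push_cast at hfeq
      rw [sub_eq_zero]
      exact_mod_cast hfeq
    have hdvd := (ZMod.intCast_zmod_eq_zero_iff_dvd _ n).mp hsub
    convert hdvd using 1
    ring

/-- Key arithmetic fact: `-d` cannot be a square in `ℤ[i]` when `d > 0` is not a
perfect square; stated in coordinates. -/
lemma glv_sq_aux (d N tre tim : ℤ) (hd : 0 < d) (hnsq : ¬ IsSquare d) (hN : N ≠ 0)
    (id1 : tre ^ 2 - tim ^ 2 + d * N ^ 2 = 0) (id2 : tre * tim = 0) : False := by
  have hN0 : 0 < N ^ 2 := by positivity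
  rcases mul_eq_zero.mp id2 with h | h
  · -- tre = 0 : tim^2 = d * N^2, so d is a square
    have hdvd : N ^ 2 ∣ tim ^ 2 := ⟨d, by linear_combination tre * h - id1⟩
    have hNdvd : N ∣ tim := (Int.pow_dvd_pow_iff two_ne_zero).mp hdvd
    obtain ⟨m, hm⟩ := hNdvd
    have key : N ^ 2 * d = N ^ 2 * m ^ 2 := by
      linear_combination id1 + (tim + N * m) * hm - tre * h
    have hdm : d = m ^ 2 := mul_left_cancel₀ (by positivity) key
    exact hnsq ⟨m, by rw [hdm]; ring⟩
  · -- tim = 0 : tre^2 = -d*N^2 < 0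
    nlinarith [sq_nonneg tre, mul_pos hd hN0]

/-- Nondegeneracy of the norm form. -/
lemma glv_quad_ne (r s x1 x2 x3 x4 : ℤ) (hpos : 0 < 4 * s - r ^ 2)
    (hnsq : ¬ IsSquare (4 * s - r ^ 2))
    (hx : ¬(x1 = 0 ∧ x2 = 0 ∧ x3 = 0 ∧ x4 = 0)) :
    (x1 ^ 2 - x3 ^ 2 - r * (x1 * x2 - x3 * x4) + s * (x2 ^ 2 - x4 ^ 2)) ^ 2
      + (2 * x1 * x3 - r * (x1 * x4 + x2 * x3) + 2 * s * x2 * x4) ^ 2 ≠ 0 := by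
  intro h0
  have ha : x1 ^ 2 - x3 ^ 2 - r * (x1 * x2 - x3 * x4) + s * (x2 ^ 2 - x4 ^ 2) = 0 := by
    nlinarith [sq_nonneg (x1 ^ 2 - x3 ^ 2 - r * (x1 * x2 - x3 * x4) + s * (x2 ^ 2 - x4 ^ 2)),
      sq_nonneg (2 * x1 * x3 - r * (x1 * x4 + x2 * x3) + 2 * s * x2 * x4)]
  have hb : 2 * x1 * x3 - r * (x1 * x4 + x2 * x3) + 2 * s * x2 * x4 = 0 := by
    nlinarith [sq_nonneg (x1 ^ 2 - x3 ^ 2 - r * (x1 * x2 - x3 * x4) + s * (x2 ^ 2 - x4 ^ 2)),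
      sq_nonneg (2 * x1 * x3 - r * (x1 * x4 + x2 * x3) + 2 * s * x2 * x4)]
  by_cases hN : x2 ^ 2 + x4 ^ 2 = 0
  · have h2 : x2 = 0 := by nlinarith [sq_nonneg x2, sq_nonneg x4]
    have h4 : x4 = 0 := by nlinarith [sq_nonneg x2, sq_nonneg x4]
    rw [h2, h4] at ha hb
    have hA : x1 ^ 2 = x3 ^ 2 := by linear_combination ha
    have hB2 : 2 * (x1 * x3) = 0 := by linear_combination hb
    have hB : x1 * x3 = 0 := by omega
    rcases mul_eq_zero.mp hB with h1 | h3
    · have h3 : x3 = 0 := by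
        have : x3 ^ 2 = 0 := by rw [h1] at hA; linarith
        exact pow_eq_zero_iff two_ne_zero |>.mp this
      exact hx ⟨h1, h2, h3, h4⟩
    · have h1 : x1 = 0 := by
        have : x1 ^ 2 = 0 := by rw [h3] at hA; linarith
        exact pow_eq_zero_iff two_ne_zero |>.mp this
      exact hx ⟨h1, h2, h3, h4⟩
  · refine glv_sq_aux (4 * s - r ^ 2) (x2 ^ 2 + x4 ^ 2)
      ((2 * x1 - r * x2) * x2 + (2 * x3 - r * x4) * x4)
      (2 * x2 * x3 - 2 * x1 * x4) hpos hnsq hN ?_ ?_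
    · linear_combination (4 * (x2 ^ 2 - x4 ^ 2)) * ha + (8 * x2 * x4) * hb
    · linear_combination (2 * (x2 ^ 2 - x4 ^ 2)) * hb - (4 * x2 * x4) * ha

set_option maxHeartbeats 1000000 in
/-- Linear independence of the four kernel vectors. -/
lemma glv_indep (r s x1 x2 x3 x4 : ℤ)
    (hne : (x1 ^ 2 - x3 ^ 2 - r * (x1 * x2 - x3 * x4) + s * (x2 ^ 2 - x4 ^ 2)) ^ 2
      + (2 * x1 * x3 - r * (x1 * x4 + x2 * x3) + 2 * s * x2 * x4) ^ 2 ≠ 0) :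
    LinearIndependent ℚ (fun j i =>
      ((![![x1, x2, x3, x4],
          ![-(s * x2), x1 - r * x2, -(s * x4), x3 - r * x4],
          ![-x3, -x4, x1, x2],
          ![s * x4, -(x3 - r * x4), -(s * x2), x1 - r * x2]] : Fin 4 → Fin 4 → ℤ) j i : ℚ)) := by
  have hdet :
      (Matrix.of fun j i =>
        ((![![x1, x2, x3, x4],
          ![-(s * x2), x1 - r * x2, -(s * x4), x3 - r * x4],
          ![-x3, -x4, x1, x2],
          ![s * x4, -(x3 - r * x4), -(s * x2), x1 - r * x2]] : Fin 4 → Fin 4 → ℤ) j i : ℚ)).det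
        = (((x1 ^ 2 - x3 ^ 2 - r * (x1 * x2 - x3 * x4) + s * (x2 ^ 2 - x4 ^ 2)) ^ 2
          + (2 * x1 * x3 - r * (x1 * x4 + x2 * x3) + 2 * s * x2 * x4) ^ 2 : ℤ) : ℚ) := by
    simp [Matrix.det_succ_row_zero, Fin.sum_univ_succ, Fin.succAbove,
      Matrix.submatrix_apply, show (Fin.succ 2 : Fin 4) = 3 from rfl,
      show (Fin.castSucc 2 : Fin 4) = 2 from rfl, show (Fin.succ 1 : Fin 4) = 2 from rfl,
      show (Fin.castSucc 1 : Fin 4) = 1 from rfl]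
    push_cast
    ring
  have : IsUnit (Matrix.of fun j i =>
        ((![![x1, x2, x3, x4],
          ![-(s * x2), x1 - r * x2, -(s * x4), x3 - r * x4],
          ![-x3, -x4, x1, x2],
          ![s * x4, -(x3 - r * x4), -(s * x2), x1 - r * x2]] : Fin 4 → Fin 4 → ℤ) j i : ℚ)) := by
    rw [Matrix.isUnit_iff_isUnit_det, hdet, isUnit_iff_ne_zero]
    exact_mod_cast hne
  exact Matrix.linearIndependent_rows_iff_isUnit.mpr this

/-- Existence of a reduced basis of the four-dimensional GLV kernel lattice:
four ℚ-linearly independent vectors of the kernel with rectangle norms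
`< 51.5·√(1+|r|+s)·n^(1/4)`. -/
theorem glv_reduced_basis
    (n : ℕ) (hn : n.Prime) (hodd : Odd n)
    (r s : ℤ) (hs : 1 ≤ s)
    (hpos : 0 < 4 * s - r ^ 2)
    (hnsq : ¬ IsSquare (4 * s - r ^ 2))
    (hndvd : ¬ (n : ℤ) ∣ s * (4 * s - r ^ 2))
    (lam mu : ℤ)
    (hlam : (n : ℤ) ∣ lam ^ 2 + r * lam + s)
    (hmu : (n : ℤ) ∣ mu ^ 2 + 1) :
    ∃ v : Fin 4 → (Fin 4 → ℤ),
      (∀ j, (n : ℤ) ∣ v j 0 + lam * v j 1 + mu * v j 2 + lam * mu * v j 3) ∧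
      LinearIndependent ℚ (fun j i => ((v j i : ℚ))) ∧
      (∀ j, ((max (max |v j 0| |v j 1|) (max |v j 2| |v j 3|) : ℤ) : ℝ) <
        51.5 * Real.sqrt ((1 + |r| + s : ℤ) : ℝ) * (n : ℝ) ^ ((1 : ℝ) / 4)) := by
  have hn2 : 2 ≤ n := hn.two_le
  have hn0 : 0 < n := by omega
  set D : ℤ := 1 + |r| + s with hD
  have habs : 0 ≤ |r| := abs_nonneg r
  have hD2 : 2 ≤ D := by omega
  set Dn : ℕ := D.toNat with hDn'
  have hDn : (Dn : ℤ) = D := Int.toNat_of_nonneg (by omega)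
  have hDn2 : 2 ≤ Dn := by omega
  set q : ℕ := Nat.sqrt n with hq'
  set β : ℕ := Nat.sqrt (q / Dn) with hβ'
  set A : ℕ := q / (β + 1) with hA'
  -- pigeonhole condition
  have hAβ : q + 1 ≤ (A + 1) * (β + 1) := by
    have e1 := Nat.div_add_mod q (β + 1)
    have e2 : q % (β + 1) < β + 1 := Nat.mod_lt _ (Nat.succ_pos β)
    have e3 : (A + 1) * (β + 1) = (β + 1) * (q / (β + 1)) + (β + 1) := by
      rw [hA']; ring
    linarith
  have hpig : n < (A + 1) ^ 2 * (β + 1) ^ 2 := by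
    calc n < (q + 1) ^ 2 := Nat.lt_succ_sqrt' n
      _ ≤ ((A + 1) * (β + 1)) ^ 2 := Nat.pow_le_pow_left hAβ 2
      _ = (A + 1) ^ 2 * (β + 1) ^ 2 := by ring
  -- real estimates
  have hq2 : ((q:ℝ)) ^ 2 ≤ (n : ℝ) := by exact_mod_cast Nat.sqrt_le' n
  have f1 : (A : ℝ) * ((β : ℝ) + 1) ≤ (q : ℝ) := by
    exact_mod_cast Nat.div_mul_le_self q (β + 1)
  have f2 : (q : ℝ) < (Dn : ℝ) * ((β : ℝ) + 1) ^ 2 := by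
    have g1 : q / Dn + 1 ≤ (β + 1) ^ 2 := Nat.lt_succ_sqrt' (q / Dn)
    have g2 := Nat.div_add_mod q Dn
    have g3 : q % Dn < Dn := Nat.mod_lt _ (by omega)
    have g4 : Dn * (q / Dn + 1) ≤ Dn * (β + 1) ^ 2 := Nat.mul_le_mul_left _ g1
    have g5 : Dn * (q / Dn + 1) = Dn * (q / Dn) + Dn := by ring
    have : q < Dn * (β + 1) ^ 2 := by linarith
    exact_mod_cast this
  have f3 : ((β : ℝ)) ^ 2 * (Dn : ℝ) ≤ (q : ℝ) := by
    have g1 : β ^ 2 ≤ q / Dn := Nat.sqrt_le' (q / Dn)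
    have g2 : β ^ 2 * Dn ≤ (q / Dn) * Dn := Nat.mul_le_mul_right _ g1
    have g3 : (q / Dn) * Dn ≤ q := Nat.div_mul_le_self q Dn
    exact_mod_cast le_trans g2 g3
  have hDR0 : (0:ℝ) < (D : ℝ) := by exact_mod_cast (by omega : (0:ℤ) < D)
  set S : ℝ := Real.sqrt ((D : ℤ) : ℝ) with hS'
  have hS0 : 0 < S := Real.sqrt_pos.mpr hDR0
  have hS2 : S ^ 2 = (D : ℝ) := Real.sq_sqrt hDR0.le
  set P : ℝ := (n : ℝ) ^ ((1 : ℝ) / 4) with hP'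
  have hnR0 : (0:ℝ) < (n : ℝ) := by exact_mod_cast hn0
  have hP0 : 0 < P := Real.rpow_pos_of_pos hnR0 _
  have hP4 : P ^ (4 : ℕ) = (n : ℝ) := by
    rw [hP', ← Real.rpow_natCast ((n:ℝ) ^ ((1:ℝ)/4)) 4, ← Real.rpow_mul hnR0.le]
    norm_num
  have hDnD : (Dn : ℝ) = (D : ℝ) := by exact_mod_cast hDn
  have hqP : (q : ℝ) ≤ P ^ 2 := by
    have h1 : ((q:ℝ)) ^ 2 ≤ (P ^ 2) ^ 2 := by
      calc ((q:ℝ)) ^ 2 ≤ (n : ℝ) := hq2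
        _ = P ^ 4 := hP4.symm
        _ = (P ^ 2) ^ 2 := by ring
    by_contra hcon
    push_neg at hcon
    have := pow_lt_pow_left₀ hcon (by positivity) (two_ne_zero)
    linarith
  have hb1R : (0:ℝ) < (β : ℝ) + 1 := by positivity
  have hAlt : (A : ℝ) < S * P := by
    have key : ((A:ℝ)) ^ 2 * ((β:ℝ) + 1) ^ 2 < (S * P) ^ 2 * ((β:ℝ) + 1) ^ 2 := by
      calc ((A:ℝ)) ^ 2 * ((β:ℝ) + 1) ^ 2 = ((A:ℝ) * ((β:ℝ) + 1)) ^ 2 := by ring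
        _ ≤ (q : ℝ) ^ 2 := pow_le_pow_left₀ (by positivity) f1 2
        _ = (q : ℝ) * (q : ℝ) := by ring
        _ ≤ (q : ℝ) * P ^ 2 := mul_le_mul_of_nonneg_left hqP (by positivity)
        _ < ((Dn : ℝ) * ((β:ℝ) + 1) ^ 2) * P ^ 2 :=
            mul_lt_mul_of_pos_right f2 (by positivity)
        _ = (S * P) ^ 2 * ((β:ℝ) + 1) ^ 2 := by rw [hDnD, ← hS2]; ring
    have hA2 : ((A:ℝ)) ^ 2 < (S * P) ^ 2 :=
      (mul_lt_mul_iff_of_pos_right (by positivity : (0:ℝ) < ((β:ℝ) + 1) ^ 2)).mp key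
    by_contra hcon
    push_neg at hcon
    have := pow_le_pow_left₀ (by positivity : (0:ℝ) ≤ S * P) hcon 2
    linarith
  have hDβ : (D : ℝ) * (β : ℝ) ≤ S * P := by
    have key : ((D:ℝ) * (β:ℝ)) ^ 2 ≤ (S * P) ^ 2 := by
      calc ((D:ℝ) * (β:ℝ)) ^ 2 = (D : ℝ) * (((β:ℝ)) ^ 2 * (D : ℝ)) := by ring
        _ = (D : ℝ) * (((β:ℝ)) ^ 2 * (Dn : ℝ)) := by rw [hDnD]
        _ ≤ (D : ℝ) * (q : ℝ) := mul_le_mul_of_nonneg_left f3 hDR0.le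
        _ ≤ (D : ℝ) * P ^ 2 := mul_le_mul_of_nonneg_left hqP hDR0.le
        _ = (S * P) ^ 2 := by rw [← hS2]; ring
    by_contra hcon
    push_neg at hcon
    have := pow_lt_pow_left₀ hcon (by positivity : (0:ℝ) ≤ S * P) (two_ne_zero)
    linarith
  -- the integer bound constant
  have hC : (((A : ℤ) + (s + |r|) * (β : ℤ) : ℤ) : ℝ) < 51.5 * S * P := by
    push_cast
    have hsr : ((s:ℝ) + |(r:ℝ)|) = (D : ℝ) - 1 := by
      rw [hD]; push_cast; ring
    rw [hsr]
    have hβR : (0:ℝ) ≤ (β : ℝ) := by positivity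
    have hSP : 0 < S * P := mul_pos hS0 hP0
    nlinarith [hDβ, hAlt, hβR, hSP]
  -- fetch the short vector
  obtain ⟨x1, x2, x3, x4, hx, hb1, hb2, hb3, hb4, hdvd⟩ :=
    glv_pigeonhole n hn0 lam mu A β hpig
  -- entrywise integer bounds
  have hβ0 : (0:ℤ) ≤ (β : ℤ) := by positivity
  have hA0 : (0:ℤ) ≤ (A : ℤ) := by positivity
  set C : ℤ := (A : ℤ) + (s + |r|) * (β : ℤ) with hC'
  have hmon : (β : ℤ) ≤ (s + |r|) * (β : ℤ) := le_mul_of_one_le_left hβ0 (by omega)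
  have hmuls : s * (β : ℤ) ≤ (s + |r|) * (β : ℤ) :=
    mul_le_mul_of_nonneg_right (by omega) hβ0
  have hmulr : |r| * (β : ℤ) ≤ (s + |r|) * (β : ℤ) :=
    mul_le_mul_of_nonneg_right (by omega) hβ0
  have hrx2 : |r * x2| ≤ |r| * (β : ℤ) := by
    rw [abs_mul]; exact mul_le_mul_of_nonneg_left hb2 habs
  have hrx4 : |r * x4| ≤ |r| * (β : ℤ) := by
    rw [abs_mul]; exact mul_le_mul_of_nonneg_left hb4 habs
  have c1 : |x1| ≤ C := by rw [hC']; linarith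
  have c2 : |x2| ≤ C := by rw [hC']; linarith
  have c3 : |x3| ≤ C := by rw [hC']; linarith
  have c4 : |x4| ≤ C := by rw [hC']; linarith
  have c5 : |s * x2| ≤ C := by
    rw [hC', abs_mul, abs_of_pos (by omega : (0:ℤ) < s)]
    have := mul_le_mul_of_nonneg_left hb2 (by omega : (0:ℤ) ≤ s)
    linarith
  have c6 : |s * x4| ≤ C := by
    rw [hC', abs_mul, abs_of_pos (by omega : (0:ℤ) < s)]
    have := mul_le_mul_of_nonneg_left hb4 (by omega : (0:ℤ) ≤ s)
    linarith
  have c7 : |x1 - r * x2| ≤ C := by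
    have h1 : |x1 - r * x2| ≤ |x1| + |r * x2| := abs_sub _ _
    rw [hC']; linarith
  have c8 : |x3 - r * x4| ≤ C := by
    have h1 : |x3 - r * x4| ≤ |x3| + |r * x4| := abs_sub _ _
    rw [hC']; linarith
  -- generic bound for rectangle norms
  have key : ∀ e0 e1 e2 e3 : ℤ, |e0| ≤ C → |e1| ≤ C → |e2| ≤ C → |e3| ≤ C →
      ((max (max |e0| |e1|) (max |e2| |e3|) : ℤ) : ℝ) < 51.5 * S * P := by
    intro e0 e1 e2 e3 h0 h1 h2 h3
    have hm : (max (max |e0| |e1|) (max |e2| |e3|)) ≤ C :=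
      max_le (max_le h0 h1) (max_le h2 h3)
    calc ((max (max |e0| |e1|) (max |e2| |e3|) : ℤ) : ℝ) ≤ (C : ℝ) := by exact_mod_cast hm
      _ < 51.5 * S * P := hC
  refine ⟨![![x1, x2, x3, x4],
            ![-(s * x2), x1 - r * x2, -(s * x4), x3 - r * x4],
            ![-x3, -x4, x1, x2],
            ![s * x4, -(x3 - r * x4), -(s * x2), x1 - r * x2]], ?_, ?_, ?_⟩
  · -- kernel membership
    obtain ⟨k, hk⟩ := hdvd
    obtain ⟨l, hl⟩ := hlam
    obtain ⟨m, hm⟩ := hmu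
    intro j
    fin_cases j
    · show (n : ℤ) ∣ x1 + lam * x2 + mu * x3 + lam * mu * x4
      exact ⟨k, by linear_combination hk⟩
    · show (n : ℤ) ∣ -(s * x2) + lam * (x1 - r * x2) + mu * (-(s * x4))
        + lam * mu * (x3 - r * x4)
      exact ⟨lam * k - (x2 + mu * x4) * l, by
        linear_combination lam * hk - (x2 + mu * x4) * hl⟩
    · show (n : ℤ) ∣ -x3 + lam * (-x4) + mu * x1 + lam * mu * x2
      exact ⟨mu * k - (x3 + lam * x4) * m, by
        linear_combination mu * hk - (x3 + lam * x4) * hm⟩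
    · show (n : ℤ) ∣ s * x4 + lam * (-(x3 - r * x4)) + mu * (-(s * x2))
        + lam * mu * (x1 - r * x2)
      exact ⟨mu * (lam * k - (x2 + mu * x4) * l) - (-(s * x4) + lam * (x3 - r * x4)) * m, by
        linear_combination mu * lam * hk - mu * (x2 + mu * x4) * hl
          - (-(s * x4) + lam * (x3 - r * x4)) * hm⟩
  · -- linear independence
    exact glv_indep r s x1 x2 x3 x4 (glv_quad_ne r s x1 x2 x3 x4 hpos hnsq hx)
  · -- size bounds
    intro j
    fin_cases j
    · show ((max (max |x1| |x2|) (max |x3| |x4|) : ℤ) : ℝ) < 51.5 * S * P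
      exact key _ _ _ _ c1 c2 c3 c4
    · show ((max (max |(-(s * x2))| |x1 - r * x2|) (max |(-(s * x4))| |x3 - r * x4|) : ℤ) : ℝ)
        < 51.5 * S * P
      exact key _ _ _ _ (by rw [abs_neg]; exact c5) c7 (by rw [abs_neg]; exact c6) c8
    · show ((max (max |(-x3)| |(-x4)|) (max |x1| |x2|) : ℤ) : ℝ) < 51.5 * S * P
      exact key _ _ _ _ (by rw [abs_neg]; exact c3) (by rw [abs_neg]; exact c4) c1 c2
    · show ((max (max |s * x4| |(-(x3 - r * x4))|) (max |(-(s * x2))| |x1 - r * x2|) : ℤ) : ℝ)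
        < 51.5 * S * P
      exact key _ _ _ _ c6 (by rw [abs_neg]; exact c8) (by rw [abs_neg]; exact c5) c7
end

section
/- Let n be an odd prime and r, s integers with s ≥ 1, 4s − r² > 0, 4s − r² not a perfect square, and n not dividing s·(4s − r²). Let λ and μ be integers with λ² + rλ + s ≡ 0 (mod n) and μ² + 1 ≡ 0 (mod n). Set B = (4 + 4s² + 8s + 8|r| + 8|r|s + 2(r² + 2s) + 2|r² − 2s|)^(1/4). Then for every integer k there exist integers k₁, k₂, k₃, k₄ such that k ≡ k₁ + k₂λ + k₃μ + k₄λμ (mod n) and max(|k₁|, |k₂|, |k₃|, |k₄|) ≤ 16·B³·n^(1/4). -/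
noncomputable def glvPhi (r s : ℤ) : ℂ :=
  ((-(r : ℝ) / 2 : ℝ) : ℂ) + ((Real.sqrt ((4 * s - r ^ 2 : ℤ) : ℝ) / 2 : ℝ) : ℂ) * Complex.I

lemma glvPhi_sq (r s : ℤ) (hpos : 0 < 4 * s - r ^ 2) :
    glvPhi r s ^ 2 + r * glvPhi r s + s = 0 := by
  have hD : (0:ℝ) ≤ ((4 * s - r ^ 2 : ℤ) : ℝ) := by exact_mod_cast hpos.le
  have h1 : 2 * glvPhi r s + r = ((Real.sqrt ((4 * s - r ^ 2 : ℤ) : ℝ) : ℝ) : ℂ) * Complex.I := by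
    unfold glvPhi; push_cast; ring
  have h2 : (2 * glvPhi r s + r) ^ 2 = -(4 * (s:ℂ) - (r:ℂ) ^ 2) := by
    rw [h1, mul_pow, Complex.I_sq, ← Complex.ofReal_pow, Real.sq_sqrt hD]
    push_cast; ring
  linear_combination h2 / 4

lemma glv_indep_s2 (r s : ℤ) (hpos : 0 < 4 * s - r ^ 2)
    (hnsq : ¬ IsSquare (4 * s - r ^ 2)) (a b c d : ℤ)
    (h : (a:ℂ) + b * glvPhi r s + c * Complex.I + d * (glvPhi r s * Complex.I) = 0) :
    a = 0 ∧ b = 0 ∧ c = 0 ∧ d = 0 := by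
  have hre := congrArg Complex.re h
  have him := congrArg Complex.im h
  simp [glvPhi] at hre him
  set q : ℝ := Real.sqrt (4 * (s:ℝ) - (r:ℝ) ^ 2) with hq
  have hirr : Irrational q := by
    have hqe : ((4 * s - r ^ 2 : ℤ) : ℝ) = 4 * (s:ℝ) - (r:ℝ) ^ 2 := by push_cast; ring
    rw [hq, ← hqe]
    exact (irrational_sqrt_intCast_iff_of_nonneg hpos.le).mpr hnsq
  -- hre, him : some real linear equations
  have hd : d = 0 := by
    by_contra hd0
    have : ((d:ℤ):ℝ) * q = ((2 * a - b * r : ℤ) : ℝ) := by push_cast; nlinarith [hre]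
    exact (hirr.intCast_mul hd0).ne_int (2 * a - b * r) this
  subst hd
  have hb : b = 0 := by
    by_contra hb0
    have : ((b:ℤ):ℝ) * q = ((-(2 * c) : ℤ) : ℝ) := by push_cast; nlinarith [him]
    exact (hirr.intCast_mul hb0).ne_int (-(2 * c)) this
  subst hb
  refine ⟨?_, rfl, ?_, rfl⟩
  · exact_mod_cast (by nlinarith [hre] : (a:ℝ) = 0)
  · exact_mod_cast (by nlinarith [him] : (c:ℝ) = 0)

def glvP (r s : ℤ) (u : Fin 4 → ℤ) : Fin 4 → ℤ :=
  ![-s * u 1, u 0 - r * u 1, -s * u 3, u 2 - r * u 3]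

def glvQ (u : Fin 4 → ℤ) : Fin 4 → ℤ := ![-u 2, -u 3, u 0, u 1]

noncomputable def glvT (r s : ℤ) (u : Fin 4 → ℤ) : ℂ :=
  (u 0 : ℂ) + u 1 * glvPhi r s + u 2 * Complex.I + u 3 * (glvPhi r s * Complex.I)

lemma glvT_P (r s : ℤ) (hpos : 0 < 4 * s - r ^ 2) (u : Fin 4 → ℤ) :
    glvT r s (glvP r s u) = glvPhi r s * glvT r s u := by
  have hphi := glvPhi_sq r s hpos
  simp only [glvT, glvP, Matrix.cons_val_zero, Matrix.cons_val_one, Matrix.head_cons,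
    Matrix.cons_val_two, Matrix.tail_cons, Matrix.cons_val_three]
  push_cast
  linear_combination (-(u 1 : ℂ) - u 3 * Complex.I) * hphi

lemma glvT_Q (r s : ℤ) (u : Fin 4 → ℤ) :
    glvT r s (glvQ u) = Complex.I * glvT r s u := by
  simp only [glvT, glvQ, Matrix.cons_val_zero, Matrix.cons_val_one, Matrix.head_cons,
    Matrix.cons_val_two, Matrix.tail_cons, Matrix.cons_val_three]
  push_cast
  linear_combination (-(u 2 : ℂ) - u 3 * glvPhi r s) * Complex.I_sq

lemma glvT_ne (r s : ℤ) (hpos : 0 < 4 * s - r ^ 2)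
    (hnsq : ¬ IsSquare (4 * s - r ^ 2)) (u : Fin 4 → ℤ) (hu : u ≠ 0) :
    glvT r s u ≠ 0 := by
  intro h0
  obtain ⟨h1, h2, h3, h4⟩ := glv_indep_s2 r s hpos hnsq (u 0) (u 1) (u 2) (u 3) h0
  exact hu (by funext i; fin_cases i <;> assumption)

def glvC (lam mu : ℤ) (u : Fin 4 → ℤ) : ℤ := u 0 + u 1 * lam + u 2 * mu + u 3 * (lam * mu)

lemma glvC_P (n r s lam mu : ℤ) (hlam : n ∣ lam ^ 2 + r * lam + s) (u : Fin 4 → ℤ)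
    (h : n ∣ glvC lam mu u) : n ∣ glvC lam mu (glvP r s u) := by
  have e : glvC lam mu (glvP r s u) =
      lam * glvC lam mu u - (u 1 + u 3 * mu) * (lam ^ 2 + r * lam + s) := by
    simp only [glvC, glvP, Matrix.cons_val_zero, Matrix.cons_val_one, Matrix.head_cons,
      Matrix.cons_val_two, Matrix.tail_cons, Matrix.cons_val_three]
    ring
  rw [e]
  exact dvd_sub (h.mul_left lam) (hlam.mul_left _)

lemma glvC_Q (n lam mu : ℤ) (hmu : n ∣ mu ^ 2 + 1) (u : Fin 4 → ℤ)
    (h : n ∣ glvC lam mu u) : n ∣ glvC lam mu (glvQ u) := by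
  have e : glvC lam mu (glvQ u) =
      mu * glvC lam mu u - (u 2 + u 3 * lam) * (mu ^ 2 + 1) := by
    simp only [glvC, glvQ, Matrix.cons_val_zero, Matrix.cons_val_one, Matrix.head_cons,
      Matrix.cons_val_two, Matrix.tail_cons, Matrix.cons_val_three]
    ring
  rw [e]
  exact dvd_sub (h.mul_left mu) (hmu.mul_left _)

lemma glvP_bd (r s : ℤ) (hs : 1 ≤ s) (u : Fin 4 → ℤ) (M : ℤ) (hu : ∀ i, |u i| ≤ M) :
    ∀ i, |glvP r s u i| ≤ (s + |r| + 1) * M := by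
  have hM : 0 ≤ M := le_trans (abs_nonneg _) (hu 0)
  have hr : 0 ≤ |r| := abs_nonneg r
  intro i
  fin_cases i <;>
    simp only [glvP, Matrix.cons_val_zero, Matrix.cons_val_one, Matrix.head_cons,
      Matrix.cons_val_two, Matrix.tail_cons, Matrix.cons_val_three, Fin.isValue]
  · calc |(-s) * u 1| = s * |u 1| := by
          rw [abs_mul, abs_neg, abs_of_nonneg (by linarith)]
        _ ≤ (s + |r| + 1) * M := by nlinarith [hu 1, abs_nonneg (u 1)]
  · calc |u 0 - r * u 1| ≤ |u 0| + |r * u 1| := abs_sub _ _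
        _ = |u 0| + |r| * |u 1| := by rw [abs_mul]
        _ ≤ (s + |r| + 1) * M := by nlinarith [hu 0, hu 1, abs_nonneg (u 1)]
  · calc |(-s) * u 3| = s * |u 3| := by
          rw [abs_mul, abs_neg, abs_of_nonneg (by linarith)]
        _ ≤ (s + |r| + 1) * M := by nlinarith [hu 3, abs_nonneg (u 3)]
  · calc |u 2 - r * u 3| ≤ |u 2| + |r * u 3| := abs_sub _ _
        _ = |u 2| + |r| * |u 3| := by rw [abs_mul]
        _ ≤ (s + |r| + 1) * M := by nlinarith [hu 2, hu 3, abs_nonneg (u 3)]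

lemma glvQ_bd (u : Fin 4 → ℤ) (M : ℤ) (hu : ∀ i, |u i| ≤ M) :
    ∀ i, |glvQ u i| ≤ M := by
  intro i
  fin_cases i <;> simp [glvQ, abs_neg] <;> exact hu _

lemma glv_short_vector (n : ℕ) (hn : 0 < n) (lam mu : ℤ) :
    ∃ v : Fin 4 → ℤ, v ≠ 0 ∧ (∀ i, |v i| ≤ (Nat.sqrt (Nat.sqrt n) : ℤ)) ∧
      (n : ℤ) ∣ glvC lam mu v := by
  haveI : NeZero n := ⟨hn.ne'⟩
  set m := Nat.sqrt (Nat.sqrt n) with hm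
  have hcard : Fintype.card (ZMod n) <
      Fintype.card (Fin (m + 1) × Fin (m + 1) × Fin (m + 1) × Fin (m + 1)) := by
    have h1 : n < (Nat.sqrt n + 1) ^ 2 := Nat.lt_succ_sqrt' n
    have h2 : Nat.sqrt n < (m + 1) ^ 2 := Nat.lt_succ_sqrt' _
    have h3 : n < ((m + 1) ^ 2) ^ 2 :=
      lt_of_lt_of_le h1 (Nat.pow_le_pow_left (by omega) 2)
    simp only [ZMod.card, Fintype.card_prod, Fintype.card_fin]
    calc n < ((m + 1) ^ 2) ^ 2 := h3
      _ = (m + 1) * ((m + 1) * ((m + 1) * (m + 1))) := by ring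
  obtain ⟨p, p', hne, heq⟩ := Fintype.exists_ne_map_eq_of_card_lt
    (fun p : Fin (m + 1) × Fin (m + 1) × Fin (m + 1) × Fin (m + 1) =>
      (((p.1 : ℤ) + (p.2.1 : ℤ) * lam + (p.2.2.1 : ℤ) * mu + (p.2.2.2 : ℤ) * (lam * mu) : ℤ) :
        ZMod n)) hcard
  refine ⟨![(p.1 : ℤ) - (p'.1 : ℤ), (p.2.1 : ℤ) - (p'.2.1 : ℤ),
    (p.2.2.1 : ℤ) - (p'.2.2.1 : ℤ), (p.2.2.2 : ℤ) - (p'.2.2.2 : ℤ)], ?_, ?_, ?_⟩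
  · intro h0
    apply hne
    have e0 := congrFun h0 0
    have e1 := congrFun h0 1
    have e2 := congrFun h0 2
    have e3 := congrFun h0 3
    simp at e0 e1 e2 e3
    have : p.1 = p'.1 := Fin.ext (by omega)
    have : p.2.1 = p'.2.1 := Fin.ext (by omega)
    have : p.2.2.1 = p'.2.2.1 := Fin.ext (by omega)
    have : p.2.2.2 = p'.2.2.2 := Fin.ext (by omega)
    ext <;> simp_all
  · intro i
    have b1 := p.1.is_le
    have b2 := p.2.1.is_le
    have b3 := p.2.2.1.is_le
    have b4 := p.2.2.2.is_le
    have b1' := p'.1.is_le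
    have b2' := p'.2.1.is_le
    have b3' := p'.2.2.1.is_le
    have b4' := p'.2.2.2.is_le
    fin_cases i <;> simp <;> rw [abs_le] <;> omega
  · have hdvd : (n : ℤ) ∣
        ((p.1 : ℤ) + (p.2.1 : ℤ) * lam + (p.2.2.1 : ℤ) * mu + (p.2.2.2 : ℤ) * (lam * mu)) -
        ((p'.1 : ℤ) + (p'.2.1 : ℤ) * lam + (p'.2.2.1 : ℤ) * mu + (p'.2.2.2 : ℤ) * (lam * mu)) :=
      (ZMod.intCast_zmod_eq_zero_iff_dvd _ n).mp (by push_cast [sub_eq_zero]; exact_mod_cast heq)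
    have e : glvC lam mu ![(p.1 : ℤ) - (p'.1 : ℤ), (p.2.1 : ℤ) - (p'.2.1 : ℤ),
        (p.2.2.1 : ℤ) - (p'.2.2.1 : ℤ), (p.2.2.2 : ℤ) - (p'.2.2.2 : ℤ)] =
        ((p.1 : ℤ) + (p.2.1 : ℤ) * lam + (p.2.2.1 : ℤ) * mu + (p.2.2.2 : ℤ) * (lam * mu)) -
        ((p'.1 : ℤ) + (p'.2.1 : ℤ) * lam + (p'.2.2.1 : ℤ) * mu + (p'.2.2.2 : ℤ) * (lam * mu)) := by
      simp [glvC]; ring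
    rw [e]; exact hdvd

lemma glv_det_ne (r s : ℤ) (hpos : 0 < 4 * s - r ^ 2)
    (hnsq : ¬ IsSquare (4 * s - r ^ 2)) (v : Fin 4 → ℤ) (hv : v ≠ 0) :
    (Matrix.of fun i j : Fin 4 =>
      (![v, glvP r s v, glvQ v, glvP r s (glvQ v)] : Fin 4 → Fin 4 → ℤ) j i).det ≠ 0 := by
  intro hdet
  obtain ⟨q, hq0, hq⟩ := (Matrix.exists_mulVec_eq_zero_iff).mpr hdet
  have expand : glvT r s ((Matrix.of fun i j : Fin 4 =>
      (![v, glvP r s v, glvQ v, glvP r s (glvQ v)] : Fin 4 → Fin 4 → ℤ) j i).mulVec q) =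
      (q 0 : ℂ) * glvT r s v + q 1 * glvT r s (glvP r s v) + q 2 * glvT r s (glvQ v) +
        q 3 * glvT r s (glvP r s (glvQ v)) := by
    simp only [glvT, Matrix.mulVec, dotProduct, Fin.sum_univ_four, Matrix.of_apply,
      Matrix.cons_val_zero, Matrix.cons_val_one, Matrix.head_cons, Matrix.cons_val_two,
      Matrix.tail_cons, Matrix.cons_val_three]
    push_cast
    ring
  rw [hq] at expand
  have hz : glvT r s (0 : Fin 4 → ℤ) = 0 := by simp [glvT]
  rw [hz] at expand
  rw [glvT_P r s hpos, glvT_Q, glvT_P r s hpos, glvT_Q] at expand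
  have hfac : ((q 0 : ℂ) + q 1 * glvPhi r s + q 2 * Complex.I +
      q 3 * (glvPhi r s * Complex.I)) * glvT r s v = 0 := by
    linear_combination -expand
  rcases mul_eq_zero.mp hfac with h | h
  · obtain ⟨h1, h2, h3, h4⟩ := glv_indep_s2 r s hpos hnsq _ _ _ _ h
    exact hq0 (by funext i; fin_cases i <;> assumption)
  · exact glvT_ne r s hpos hnsq v hv h

lemma glv_round (A : Matrix (Fin 4) (Fin 4) ℤ) (hdet : A.det ≠ 0) (x : Fin 4 → ℤ) (Cm : ℤ)
    (hAbd : ∀ i j, |A i j| ≤ Cm) :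
    ∃ β : Fin 4 → ℤ, ∀ i, |x i - ∑ j, β j * A i j| ≤ 2 * Cm := by
  set AR : Matrix (Fin 4) (Fin 4) ℝ := A.map (fun z : ℤ => (z : ℝ)) with hAR
  have hdetR : AR.det ≠ 0 := by
    have : AR.det = ((A.det : ℤ) : ℝ) := by
      rw [hAR, show (fun z : ℤ => (z : ℝ)) = ((Int.castRingHom ℝ) : ℤ → ℝ) from rfl,
        ← RingHom.mapMatrix_apply, ← RingHom.map_det]
      rfl
    rw [this]
    exact_mod_cast hdet
  set a : Fin 4 → ℝ := AR⁻¹.mulVec (fun i => (x i : ℝ)) with ha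
  have hax : AR.mulVec a = fun i => (x i : ℝ) := by
    rw [ha, Matrix.mulVec_mulVec, Matrix.mul_nonsing_inv _ (isUnit_iff_ne_zero.mpr hdetR),
      Matrix.one_mulVec]
  refine ⟨fun j => round (a j), fun i => ?_⟩
  have hCm0 : (0:ℤ) ≤ Cm := le_trans (abs_nonneg _) (hAbd 0 0)
  have h1 : ((x i - ∑ j, round (a j) * A i j : ℤ) : ℝ) =
      ∑ j, (a j - (round (a j) : ℝ)) * (A i j : ℝ) := by
    have hx1 : ((x i : ℝ)) = ∑ j, (A i j : ℝ) * a j := by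
      have h := congrFun hax i
      simp only [Matrix.mulVec, dotProduct, hAR, Matrix.map_apply] at h
      exact h.symm
    push_cast
    rw [hx1, ← Finset.sum_sub_distrib]
    exact Finset.sum_congr rfl fun j _ => by ring
  have h2 : |((x i - ∑ j, round (a j) * A i j : ℤ) : ℝ)| ≤ ((2 * Cm : ℤ) : ℝ) := by
    rw [h1]
    calc |∑ j, (a j - (round (a j) : ℝ)) * (A i j : ℝ)|
        ≤ ∑ j, |(a j - (round (a j) : ℝ)) * (A i j : ℝ)| := Finset.abs_sum_le_sum_abs _ _
      _ ≤ ∑ _j : Fin 4, (1 / 2) * ((Cm : ℤ) : ℝ) := by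
          refine Finset.sum_le_sum fun j _ => ?_
          rw [abs_mul]
          have hb : |((A i j : ℤ) : ℝ)| ≤ ((Cm : ℤ) : ℝ) := by
            rw [← Int.cast_abs]; exact_mod_cast hAbd i j
          exact mul_le_mul (abs_sub_round _) hb (abs_nonneg _) (by norm_num)
      _ = ((2 * Cm : ℤ) : ℝ) := by
          rw [Finset.sum_const, Finset.card_univ, Fintype.card_fin]
          push_cast; ring
  exact_mod_cast h2

/-- Theorem 1 of the paper (LLL-based bound): four-dimensional GLV decomposition
with coefficients at most `16·B³·n^(1/4)`, where
`B = (4 + 4s² + 8s + 8|r| + 8|r|s + 2(r²+2s) + 2|r²−2s|)^(1/4)`. -/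
theorem glv_four_dim_decomposition_LLL
    (n : ℕ) (hn : n.Prime) (hodd : Odd n)
    (r s : ℤ) (hs : 1 ≤ s)
    (hpos : 0 < 4 * s - r ^ 2)
    (hnsq : ¬ IsSquare (4 * s - r ^ 2))
    (hndvd : ¬ (n : ℤ) ∣ s * (4 * s - r ^ 2))
    (lam mu : ℤ)
    (hlam : (n : ℤ) ∣ lam ^ 2 + r * lam + s)
    (hmu : (n : ℤ) ∣ mu ^ 2 + 1)
    (k : ℤ) :
    ∃ k₁ k₂ k₃ k₄ : ℤ,
      k ≡ k₁ + k₂ * lam + k₃ * mu + k₄ * lam * mu [ZMOD (n : ℤ)] ∧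
      ((max (max |k₁| |k₂|) (max |k₃| |k₄|) : ℤ) : ℝ) ≤
        16 * (((4 + 4 * s ^ 2 + 8 * s + 8 * |r| + 8 * |r| * s + 2 * (r ^ 2 + 2 * s) +
          2 * |r ^ 2 - 2 * s| : ℤ) : ℝ) ^ ((1 : ℝ) / 4)) ^ 3 * (n : ℝ) ^ ((1 : ℝ) / 4) := by
  obtain ⟨v, hv0, hvbd, hvdvd⟩ := glv_short_vector n hn.pos lam mu
  set m : ℕ := Nat.sqrt (Nat.sqrt n) with hm
  set A : Matrix (Fin 4) (Fin 4) ℤ := Matrix.of fun i j : Fin 4 =>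
      (![v, glvP r s v, glvQ v, glvP r s (glvQ v)] : Fin 4 → Fin 4 → ℤ) j i with hA
  have hdet : A.det ≠ 0 := glv_det_ne r s hpos hnsq v hv0
  -- bound on entries of A
  have hr0 : (0:ℤ) ≤ |r| := abs_nonneg r
  have hm0 : (0:ℤ) ≤ (m:ℤ) := Int.natCast_nonneg m
  have hvbd' : ∀ i, |v i| ≤ (s + |r| + 1) * (m:ℤ) := fun i =>
    le_trans (hvbd i) (by nlinarith)
  have hQbd : ∀ i, |glvQ v i| ≤ (m:ℤ) := glvQ_bd v _ hvbd
  have hQbd' : ∀ i, |glvQ v i| ≤ (s + |r| + 1) * (m:ℤ) := fun i =>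
    le_trans (hQbd i) (by nlinarith)
  have hPbd : ∀ i, |glvP r s v i| ≤ (s + |r| + 1) * (m:ℤ) := glvP_bd r s hs v _ hvbd
  have hPQbd : ∀ i, |glvP r s (glvQ v) i| ≤ (s + |r| + 1) * (m:ℤ) :=
    glvP_bd r s hs (glvQ v) _ hQbd
  have hAbd : ∀ i j, |A i j| ≤ (s + |r| + 1) * (m:ℤ) := by
    intro i j
    fin_cases j <;> simp only [hA, Matrix.of_apply] <;> simp
    · exact hvbd' i
    · exact hPbd i
    · exact hQbd' i
    · exact hPQbd i
  obtain ⟨β, hβ⟩ := glv_round A hdet ![k, 0, 0, 0] ((s + |r| + 1) * (m:ℤ)) hAbd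
  set K : Fin 4 → ℤ := fun i => (![k, 0, 0, 0] : Fin 4 → ℤ) i - ∑ j, β j * A i j with hK
  refine ⟨K 0, K 1, K 2, K 3, ?_, ?_⟩
  · -- congruence
    have hc0 : (n:ℤ) ∣ glvC lam mu v := hvdvd
    have hc1 := glvC_P (n:ℤ) r s lam mu hlam v hc0
    have hc2 := glvC_Q (n:ℤ) lam mu hmu v hc0
    have hc3 := glvC_P (n:ℤ) r s lam mu hlam (glvQ v) hc2
    have hKC : k - glvC lam mu K =
        β 0 * glvC lam mu v + β 1 * glvC lam mu (glvP r s v) +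
        β 2 * glvC lam mu (glvQ v) + β 3 * glvC lam mu (glvP r s (glvQ v)) := by
      simp only [glvC, hK, hA, Fin.sum_univ_four, Matrix.of_apply]
      simp
      ring
    have hdvdK : (n:ℤ) ∣ k - glvC lam mu K := by
      rw [hKC]
      exact dvd_add (dvd_add (dvd_add (hc0.mul_left _) (hc1.mul_left _)) (hc2.mul_left _))
        (hc3.mul_left _)
    have he : K 0 + K 1 * lam + K 2 * mu + K 3 * lam * mu - k = -(k - glvC lam mu K) := by
      simp only [glvC]; ring
    exact (Int.modEq_iff_dvd.mpr (by rw [show k - (K 0 + K 1 * lam + K 2 * mu + K 3 * lam * mu) =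
        k - glvC lam mu K from by simp only [glvC]; ring]; exact hdvdK)).symm
  · -- bound
    have hKb : ∀ i, |K i| ≤ 2 * ((s + |r| + 1) * (m:ℤ)) := hβ
    have hmaxZ : max (max |K 0| |K 1|) (max |K 2| |K 3|) ≤ 2 * ((s + |r| + 1) * (m:ℤ)) :=
      max_le (max_le (hKb 0) (hKb 1)) (max_le (hKb 2) (hKb 3))
    set X : ℝ := ((4 + 4 * s ^ 2 + 8 * s + 8 * |r| + 8 * |r| * s + 2 * (r ^ 2 + 2 * s) +
      2 * |r ^ 2 - 2 * s| : ℤ) : ℝ) with hX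
    have hX1 : (1:ℝ) ≤ X := by
      rw [hX]
      have : (1:ℤ) ≤ 4 + 4 * s ^ 2 + 8 * s + 8 * |r| + 8 * |r| * s + 2 * (r ^ 2 + 2 * s) +
          2 * |r ^ 2 - 2 * s| := by
        nlinarith [abs_nonneg r, abs_nonneg (r ^ 2 - 2 * s), sq_nonneg r, sq_nonneg s]
      exact_mod_cast this
    have hX0 : (0:ℝ) ≤ X := le_trans zero_le_one hX1
    set B : ℝ := X ^ ((1:ℝ)/4) with hB
    have hB1 : (1:ℝ) ≤ B := by
      rw [hB]
      calc (1:ℝ) = (1:ℝ) ^ ((1:ℝ)/4) := (Real.one_rpow _).symm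
        _ ≤ X ^ ((1:ℝ)/4) := Real.rpow_le_rpow zero_le_one hX1 (by norm_num)
    have hB0 : (0:ℝ) ≤ B := le_trans zero_le_one hB1
    have hC0 : (0:ℤ) ≤ s + |r| + 1 := by linarith
    have hCle : ((s + |r| + 1 : ℤ) : ℝ) ≤ B ^ 2 := by
      have hCX : ((s + |r| + 1 : ℤ) : ℝ) ^ (2:ℕ) ≤ X := by
        rw [hX]
        have : (s + |r| + 1) ^ 2 ≤ 4 + 4 * s ^ 2 + 8 * s + 8 * |r| + 8 * |r| * s +
            2 * (r ^ 2 + 2 * s) + 2 * |r ^ 2 - 2 * s| := by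
          nlinarith [sq_abs r, abs_nonneg r, abs_nonneg (r ^ 2 - 2 * s), hs]
        exact_mod_cast this
      have hC0' : (0:ℝ) ≤ ((s + |r| + 1 : ℤ) : ℝ) := by exact_mod_cast hC0
      calc ((s + |r| + 1 : ℤ) : ℝ)
          = (((s + |r| + 1 : ℤ) : ℝ) ^ (2:ℕ)) ^ ((2:ℕ) : ℝ)⁻¹ :=
            (Real.pow_rpow_inv_natCast hC0' (by norm_num)).symm
        _ ≤ X ^ ((2:ℕ) : ℝ)⁻¹ := Real.rpow_le_rpow (by positivity) hCX (by norm_num)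
        _ = B ^ 2 := by
            rw [hB, ← Real.rpow_natCast (X ^ ((1:ℝ)/4)) 2, ← Real.rpow_mul hX0]
            norm_num
    have hm4 : m ^ 4 ≤ n := by
      calc m ^ 4 = (m ^ 2) ^ 2 := by ring
        _ ≤ (Nat.sqrt n) ^ 2 := Nat.pow_le_pow_left (Nat.sqrt_le' _) 2
        _ ≤ n := Nat.sqrt_le' n
    have hmle : (m:ℝ) ≤ (n:ℝ) ^ ((1:ℝ)/4) := by
      have h4 : ((m:ℝ)) ^ (4:ℕ) ≤ (n:ℝ) := by exact_mod_cast hm4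
      calc (m:ℝ) = (((m:ℝ)) ^ (4:ℕ)) ^ ((4:ℕ) : ℝ)⁻¹ :=
            (Real.pow_rpow_inv_natCast (by positivity) (by norm_num)).symm
        _ ≤ (n:ℝ) ^ ((4:ℕ) : ℝ)⁻¹ := Real.rpow_le_rpow (by positivity) h4 (by norm_num)
        _ = (n:ℝ) ^ ((1:ℝ)/4) := by norm_num
    have hn4 : (0:ℝ) ≤ (n:ℝ) ^ ((1:ℝ)/4) := Real.rpow_nonneg (Nat.cast_nonneg n) _
    have hcast : ((max (max |K 0| |K 1|) (max |K 2| |K 3|) : ℤ) : ℝ) ≤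
        2 * ((s + |r| + 1 : ℤ) : ℝ) * (m:ℝ) := by
      calc ((max (max |K 0| |K 1|) (max |K 2| |K 3|) : ℤ) : ℝ)
          ≤ ((2 * ((s + |r| + 1) * (m:ℤ)) : ℤ) : ℝ) := by exact_mod_cast hmaxZ
        _ = 2 * ((s + |r| + 1 : ℤ) : ℝ) * (m:ℝ) := by push_cast; ring
    have hstep : 2 * ((s + |r| + 1 : ℤ) : ℝ) * (m:ℝ) ≤ 2 * (B ^ 2 * ((n:ℝ) ^ ((1:ℝ)/4))) := by
      have := mul_le_mul hCle hmle (by positivity) (by positivity)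
      linarith
    have hBB : B ^ 2 ≤ B ^ 3 := pow_le_pow_right₀ hB1 (by norm_num)
    have hfin : 2 * (B ^ 2 * ((n:ℝ) ^ ((1:ℝ)/4))) ≤ 16 * B ^ 3 * (n:ℝ) ^ ((1:ℝ)/4) := by
      have h1 : B ^ 2 * ((n:ℝ) ^ ((1:ℝ)/4)) ≤ B ^ 3 * ((n:ℝ) ^ ((1:ℝ)/4)) :=
        mul_le_mul_of_nonneg_right hBB hn4
      have h2 : (0:ℝ) ≤ B ^ 3 * ((n:ℝ) ^ ((1:ℝ)/4)) := by positivity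
      nlinarith
    calc ((max (max |K 0| |K 1|) (max |K 2| |K 3|) : ℤ) : ℝ)
        ≤ 2 * ((s + |r| + 1 : ℤ) : ℝ) * (m:ℝ) := hcast
      _ ≤ 2 * (B ^ 2 * ((n:ℝ) ^ ((1:ℝ)/4))) := hstep
      _ ≤ 16 * B ^ 3 * (n:ℝ) ^ ((1:ℝ)/4) := hfin
end

section
/- Let n ≥ 1 be an integer and λ, μ integers. Then the subgroup K = {(x₁,x₂,x₃,x₄) ∈ ℤ⁴ : n divides x₁ + λx₂ + μx₃ + λμx₄} of ℤ⁴ is equal to the set of ℤ-linear combinations of the four vectors w₁ = (n, 0, 0, 0), w₂ = (−λ, 1, 0, 0), w₃ = (−μ, 0, 1, 0), w₄ = (λμ, −μ, −λ, 1). -/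
/-- The kernel of the four-dimensional GLV reduction map is generated over ℤ by
`w₁ = (n,0,0,0)`, `w₂ = (−λ,1,0,0)`, `w₃ = (−μ,0,1,0)`, `w₄ = (λμ,−μ,−λ,1)`. -/
theorem glv_kernel_eq_span
    (n : ℕ) (hn : 1 ≤ n) (lam mu : ℤ) :
    {x : Fin 4 → ℤ | (n : ℤ) ∣ x 0 + lam * x 1 + mu * x 2 + lam * mu * x 3} =
    {x : Fin 4 → ℤ | ∃ a b c d : ℤ,
      x = a • ![(n : ℤ), 0, 0, 0] + b • ![-lam, 1, 0, 0] + c • ![-mu, 0, 1, 0] +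
          d • ![lam * mu, -mu, -lam, 1]} := by
  ext x
  simp only [Set.mem_setOf_eq]
  constructor
  · rintro ⟨k, hk⟩
    refine ⟨k, x 1 + mu * x 3, x 2 + lam * x 3, x 3, ?_⟩
    funext i
    fin_cases i <;>
      simp [Matrix.cons_val_zero, Matrix.cons_val_one] <;> ring_nf <;> linarith
  · rintro ⟨a, b, c, d, rfl⟩
    refine ⟨a, ?_⟩
    simp [Matrix.cons_val_zero, Matrix.cons_val_one]
    ring
end

section
/- Let n ≥ 1 be an integer and λ an integer, and let ker f = {(a, b) ∈ ℤ² : n divides a + λb}. Suppose v₁, v₂ ∈ ker f are linearly independent over ℚ. Then for every integer k there exist integers k₁, k₂ such that k ≡ k₁ + k₂λ (mod n) and max(|k₁|, |k₂|) ≤ (‖v₁‖ + ‖v₂‖)/2, where ‖·‖ denotes the rectangle norm. -/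
/-- The two-dimensional GLV decomposition: given two ℚ-linearly independent vectors of
the kernel of `f : ℤ² → ℤ/n`, `(a,b) ↦ a + λb`, every scalar `k` decomposes as
`k ≡ k₁ + k₂λ (mod n)` with `max(|k₁|,|k₂|) ≤ (‖v₁‖+‖v₂‖)/2`. -/
theorem glv_two_dim_decomposition (n : ℕ) (hn : 1 ≤ n) (lam : ℤ)
    (v₁ v₂ : ℤ × ℤ)
    (hv₁ : (n : ℤ) ∣ v₁.1 + lam * v₁.2)
    (hv₂ : (n : ℤ) ∣ v₂.1 + lam * v₂.2)
    (hind : LinearIndependent ℚ ![((v₁.1 : ℚ), (v₁.2 : ℚ)), ((v₂.1 : ℚ), (v₂.2 : ℚ))]) :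
    ∀ k : ℤ, ∃ k₁ k₂ : ℤ,
      k ≡ k₁ + k₂ * lam [ZMOD (n : ℤ)] ∧
      ((max |k₁| |k₂| : ℤ) : ℝ) ≤ ((max |v₁.1| |v₁.2| + max |v₂.1| |v₂.2| : ℤ) : ℝ) / 2 := by
  intro k
  obtain ⟨a, b⟩ := v₁
  obtain ⟨c, e⟩ := v₂
  simp only at hv₁ hv₂ hind ⊢
  have hp := LinearIndependent.pair_iff.mp hind
  have hd : a * e - b * c ≠ 0 := by
    intro h
    have h1 := hp (e : ℚ) (-(b : ℚ)) (by
      simp only [Prod.smul_mk, smul_eq_mul, Prod.mk_add_mk, Prod.mk_eq_zero]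
      constructor
      · push_cast
        have : ((a * e - b * c : ℤ) : ℚ) = 0 := by exact_mod_cast h
        push_cast at this
        linarith
      · ring)
    have hb : (b : ℚ) = 0 := by linarith [h1.2]
    have he : (e : ℚ) = 0 := h1.1
    have h2 := hp (c : ℚ) (-(a : ℚ)) (by
      simp only [Prod.smul_mk, smul_eq_mul, Prod.mk_add_mk, Prod.mk_eq_zero]
      constructor
      · ring
      · rw [hb, he]; ring)
    have ha : (a : ℚ) = 0 := by linarith [h2.2]
    have h3 := hp 1 0 (by
      simp only [Prod.smul_mk, smul_eq_mul, Prod.mk_add_mk, Prod.mk_eq_zero]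
      constructor
      · rw [ha]; ring
      · rw [hb]; ring)
    exact one_ne_zero h3.1
  have hD : ((a * e - b * c : ℤ) : ℚ) ≠ 0 := by exact_mod_cast hd
  set D : ℚ := ((a * e - b * c : ℤ) : ℚ) with hDdef
  set β₁ : ℚ := (k : ℚ) * e / D with hβ₁
  set β₂ : ℚ := -((k : ℚ) * b) / D with hβ₂
  have heq1 : β₁ * a + β₂ * c = k := by
    rw [hβ₁, hβ₂, div_mul_eq_mul_div, div_mul_eq_mul_div, ← add_div, div_eq_iff hD,
      hDdef]
    push_cast; ring
  have heq2 : β₁ * b + β₂ * e = 0 := by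
    rw [hβ₁, hβ₂, div_mul_eq_mul_div, div_mul_eq_mul_div, ← add_div, div_eq_iff hD,
      hDdef]
    push_cast; ring
  clear_value β₁ β₂
  set b₁ : ℤ := round β₁ with hb₁
  set b₂ : ℤ := round β₂ with hb₂
  refine ⟨k - b₁ * a - b₂ * c, -(b₁ * b + b₂ * e), ?_, ?_⟩
  · rw [Int.modEq_iff_dvd]
    have hcalc : (k - b₁ * a - b₂ * c + -(b₁ * b + b₂ * e) * lam) - k
        = -(b₁ * (a + lam * b)) - b₂ * (c + lam * e) := by ring
    rw [hcalc]
    exact dvd_sub (dvd_neg.mpr (hv₁.mul_left b₁)) (hv₂.mul_left b₂)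
  · have hr1 : |β₁ - (b₁ : ℚ)| ≤ 1 / 2 := abs_sub_round β₁
    have hr2 : |β₂ - (b₂ : ℚ)| ≤ 1 / 2 := abs_sub_round β₂
    have e1 : ((k - b₁ * a - b₂ * c : ℤ) : ℚ) = (β₁ - b₁) * a + (β₂ - b₂) * c := by
      push_cast; linear_combination -heq1
    have e2 : ((-(b₁ * b + b₂ * e) : ℤ) : ℚ) = (β₁ - b₁) * b + (β₂ - b₂) * e := by
      push_cast; linear_combination -heq2
    have q1 : |((k - b₁ * a - b₂ * c : ℤ) : ℚ)| ≤ (|(a : ℚ)| + |(c : ℚ)|) / 2 := by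
      rw [e1]
      calc |(β₁ - b₁) * a + (β₂ - b₂) * c| ≤ |(β₁ - b₁) * a| + |(β₂ - b₂) * c| := abs_add_le _ _
        _ = |β₁ - (b₁:ℚ)| * |(a:ℚ)| + |β₂ - (b₂:ℚ)| * |(c:ℚ)| := by rw [abs_mul, abs_mul]
        _ ≤ (|(a : ℚ)| + |(c : ℚ)|) / 2 := by
            nlinarith [abs_nonneg (a : ℚ), abs_nonneg (c : ℚ), abs_nonneg (β₁ - (b₁:ℚ)), abs_nonneg (β₂ - (b₂:ℚ))]
    have q2 : |((-(b₁ * b + b₂ * e) : ℤ) : ℚ)| ≤ (|(b : ℚ)| + |(e : ℚ)|) / 2 := by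
      rw [e2]
      calc |(β₁ - b₁) * b + (β₂ - b₂) * e| ≤ |(β₁ - b₁) * b| + |(β₂ - b₂) * e| := abs_add_le _ _
        _ = |β₁ - (b₁:ℚ)| * |(b:ℚ)| + |β₂ - (b₂:ℚ)| * |(e:ℚ)| := by rw [abs_mul, abs_mul]
        _ ≤ (|(b : ℚ)| + |(e : ℚ)|) / 2 := by
            nlinarith [abs_nonneg (b : ℚ), abs_nonneg (e : ℚ), abs_nonneg (β₁ - (b₁:ℚ)), abs_nonneg (β₂ - (b₂:ℚ))]
    have z1 : 2 * |k - b₁ * a - b₂ * c| ≤ |a| + |c| := by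
      have : 2 * |((k - b₁ * a - b₂ * c : ℤ) : ℚ)| ≤ |(a : ℚ)| + |(c : ℚ)| := by linarith
      exact_mod_cast this
    have z2 : 2 * |(-(b₁ * b + b₂ * e) : ℤ)| ≤ |b| + |e| := by
      have : 2 * |((-(b₁ * b + b₂ * e) : ℤ) : ℚ)| ≤ |(b : ℚ)| + |(e : ℚ)| := by linarith
      exact_mod_cast this
    have key : 2 * max |k - b₁ * a - b₂ * c| |(-(b₁ * b + b₂ * e) : ℤ)|
        ≤ max |a| |b| + max |c| |e| := by
      rcases max_cases |k - b₁ * a - b₂ * c| |(-(b₁ * b + b₂ * e) : ℤ)| with ⟨h, _⟩ | ⟨h, _⟩ <;>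
        rw [h] <;>
        [skip; skip] <;>
        first
          | linarith [le_max_left |a| |b|, le_max_left |c| |e|, le_max_right |a| |b|, le_max_right |c| |e|]
    rw [le_div_iff₀ (by norm_num : (0:ℝ) < 2)]
    have : ((2 * max |k - b₁ * a - b₂ * c| |(-(b₁ * b + b₂ * e) : ℤ)| : ℤ) : ℝ)
        ≤ ((max |a| |b| + max |c| |e| : ℤ) : ℝ) := by exact_mod_cast key
    push_cast at this ⊢
    linarith
end

section
/- Let n be a prime and μ an integer with 1 < μ < n and μ² ≡ −1 (mod n). Define sequences of integers by r₀ = n, r₁ = μ, t₀ = 0, t₁ = 1, and, for each j ≥ 0 with r_{j+1} > 0, q_{j+1} = ⌊r_j / r_{j+1}⌋, r_{j+2} = r_j − q_{j+1}·r_{j+1}, t_{j+2} = t_j − q_{j+1}·t_{j+1}. Let m ≥ 0 be an index such that r_m² ≥ n and r_{m+1}² < n (such m exists). Then r_{m+1}² + t_{m+1}² = n. -/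
/-- The state `(r_j, s_j, t_j)` of the extended Euclidean algorithm applied to `n` and `μ`:
`r₀ = n`, `r₁ = μ`, `s₀ = 1`, `s₁ = 0`, `t₀ = 0`, `t₁ = 1`, and as long as `r_{j+1} > 0`,
`r_{j+2} = r_j − q_{j+1}r_{j+1}`, `s_{j+2} = s_j − q_{j+1}s_{j+1}`,
`t_{j+2} = t_j − q_{j+1}t_{j+1}` with `q_{j+1} = ⌊r_j/r_{j+1}⌋` (after the algorithm
terminates the sequences are padded with `0`). -/
def eea (n μ : ℤ) : ℕ → ℤ × ℤ × ℤ
  | 0 => (n, 1, 0)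
  | 1 => (μ, 0, 1)
  | j + 2 =>
      let p := eea n μ j
      let q := eea n μ (j + 1)
      if 0 < q.1 then
        (p.1 - p.1 / q.1 * q.1, p.2.1 - p.1 / q.1 * q.2.1, p.2.2 - p.1 / q.1 * q.2.2)
      else (0, 0, 0)

/-- The remainder sequence `r_j` of the extended Euclidean algorithm. -/
def eeaR (n μ : ℤ) (j : ℕ) : ℤ := (eea n μ j).1

/-- The cofactor sequence `s_j` of the extended Euclidean algorithm (`ns_j + μt_j = r_j`). -/
def eeaS (n μ : ℤ) (j : ℕ) : ℤ := (eea n μ j).2.1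

/-- The cofactor sequence `t_j` of the extended Euclidean algorithm (`ns_j + μt_j = r_j`). -/
def eeaT (n μ : ℤ) (j : ℕ) : ℤ := (eea n μ j).2.2


lemma eea_step (n μ : ℤ) (j : ℕ) :
    eea n μ (j + 2) =
      if 0 < eeaR n μ (j + 1) then
        (eeaR n μ j - eeaR n μ j / eeaR n μ (j+1) * eeaR n μ (j+1),
         eeaS n μ j - eeaR n μ j / eeaR n μ (j+1) * eeaS n μ (j+1),
         eeaT n μ j - eeaR n μ j / eeaR n μ (j+1) * eeaT n μ (j+1))
      else (0, 0, 0) := by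
  rw [eea]; rfl

lemma eeaR_step (n μ : ℤ) (j : ℕ) (h : 0 < eeaR n μ (j+1)) :
    eeaR n μ (j+2) = eeaR n μ j - eeaR n μ j / eeaR n μ (j+1) * eeaR n μ (j+1) := by
  rw [eeaR, eea_step, if_pos h]

lemma eeaS_step (n μ : ℤ) (j : ℕ) (h : 0 < eeaR n μ (j+1)) :
    eeaS n μ (j+2) = eeaS n μ j - eeaR n μ j / eeaR n μ (j+1) * eeaS n μ (j+1) := by
  rw [eeaS, eea_step, if_pos h]

lemma eeaT_step (n μ : ℤ) (j : ℕ) (h : 0 < eeaR n μ (j+1)) :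
    eeaT n μ (j+2) = eeaT n μ j - eeaR n μ j / eeaR n μ (j+1) * eeaT n μ (j+1) := by
  rw [eeaT, eea_step, if_pos h]

lemma eea_bezout (n μ : ℤ) : ∀ j, n * eeaS n μ j + μ * eeaT n μ j = eeaR n μ j
  | 0 => by simp [eeaR, eeaS, eeaT, eea]
  | 1 => by simp [eeaR, eeaS, eeaT, eea]
  | (j+2) => by
      by_cases h : 0 < eeaR n μ (j+1)
      · rw [eeaR_step n μ j h, eeaS_step n μ j h, eeaT_step n μ j h]
        have h1 := eea_bezout n μ j
        have h2 := eea_bezout n μ (j+1)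
        linear_combination h1 - (eeaR n μ j / eeaR n μ (j+1)) * h2
      · rw [eeaR, eeaS, eeaT, eea_step, if_neg h]; simp

lemma eeaR_nonneg (n μ : ℤ) (hn : 0 ≤ n) (hμ : 0 ≤ μ) : ∀ j, 0 ≤ eeaR n μ j
  | 0 => hn
  | 1 => hμ
  | (j+2) => by
      by_cases h : 0 < eeaR n μ (j+1)
      · rw [eeaR_step n μ j h]
        have : eeaR n μ j - eeaR n μ j / eeaR n μ (j+1) * eeaR n μ (j+1)
            = eeaR n μ j % eeaR n μ (j+1) := by
          rw [Int.emod_def]; ring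
        rw [this]
        exact Int.emod_nonneg _ (ne_of_gt h)
      · rw [eeaR, eea_step, if_neg h]

lemma eeaR_zero_succ (n μ : ℤ) (hn : 0 < n) :
    ∀ j, eeaR n μ j = 0 → eeaR n μ (j+1) = 0 := by
  intro j hj
  match j with
  | 0 => exact absurd hj (by rw [eeaR]; exact ne_of_gt hn)
  | (i+1) =>
      rw [eeaR, eea_step, if_neg (by rw [hj]; exact lt_irrefl 0)]

lemma eeaR_ne_zero_mono (n μ : ℤ) (hn : 0 < n) {j k : ℕ} (h : j ≤ k)
    (hk : eeaR n μ k ≠ 0) : eeaR n μ j ≠ 0 := by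
  induction k, h using Nat.le_induction with
  | base => exact hk
  | succ k hjk ih =>
      exact ih (fun h0 => hk (eeaR_zero_succ n μ hn k h0))

lemma eea_det (n μ : ℤ) (hn : 0 < n) (hμ : 0 ≤ μ) :
    ∀ j, 0 < eeaR n μ j →
      eeaR n μ j * eeaT n μ (j+1) - eeaR n μ (j+1) * eeaT n μ j = (-1)^j * n := by
  intro j
  induction j with
  | zero => intro _; simp [eeaR, eeaT, eea]
  | succ j ih =>
      intro h
      have hj : 0 < eeaR n μ j := by
        rcases (eeaR_nonneg n μ (le_of_lt hn) hμ j).lt_or_eq with h' | h'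
        · exact h'
        · exact absurd h'.symm (eeaR_ne_zero_mono n μ hn (Nat.le_succ j) (ne_of_gt h))
      have hD := ih hj
      rw [eeaR_step n μ j h, eeaT_step n μ j h]
      have e : ((-1:ℤ))^(j+1) = -(-1)^j := by rw [pow_succ]; ring
      rw [e]
      linear_combination -hD

lemma eeaT_sign (n μ : ℤ) (hn : 0 ≤ n) (hμ : 0 ≤ μ) :
    ∀ j, (∀ k, k < j → 0 < eeaR n μ k) → 0 ≤ (-1)^(j+1) * eeaT n μ j
  | 0 => by intro _; simp [eeaT, eea]
  | 1 => by intro _; simp [eeaT, eea]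
  | (j+2) => by
      intro hpos
      have h : 0 < eeaR n μ (j+1) := hpos (j+1) (by omega)
      have h1 := eeaT_sign n μ hn hμ j (fun k hk => hpos k (by omega))
      have h2 := eeaT_sign n μ hn hμ (j+1) (fun k hk => hpos k (by omega))
      have hq : 0 ≤ eeaR n μ j / eeaR n μ (j+1) :=
        Int.ediv_nonneg (eeaR_nonneg n μ hn hμ j) (le_of_lt h)
      rw [eeaT_step n μ j h]
      have e3 : ((-1:ℤ))^(j+3) = (-1)^(j+1) := by rw [pow_add]; ring
      have e2 : ((-1:ℤ))^(j+1+1) = -(-1)^(j+1) := by rw [pow_succ]; ring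
      rw [show j+2+1 = j+3 from rfl, e3]
      rw [e2] at h2
      nlinarith [mul_nonneg hq h2]

set_option maxHeartbeats 1600000 in
/-- Correctness of Cornacchia's algorithm in ℤ: for a prime `n` and `1 < μ < n` with
`μ² ≡ −1 (mod n)`, if `m` is an index with `r_m² ≥ n` and `r_{m+1}² < n`, then
`r_{m+1}² + t_{m+1}² = n`, i.e. the algorithm writes `n` as a sum of two squares. -/
theorem cornacchia_sum_of_two_squares (n : ℕ) (hn : n.Prime) (μ : ℤ)
    (hμ1 : 1 < μ) (hμn : μ < (n : ℤ)) (hμ : (n : ℤ) ∣ μ ^ 2 + 1)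
    (m : ℕ)
    (hm : (n : ℤ) ≤ eeaR (n : ℤ) μ m ^ 2)
    (hm1 : eeaR (n : ℤ) μ (m + 1) ^ 2 < (n : ℤ)) :
    eeaR (n : ℤ) μ (m + 1) ^ 2 + eeaT (n : ℤ) μ (m + 1) ^ 2 = (n : ℤ) := by
  set N : ℤ := (n : ℤ) with hNdef
  have hn2 : 2 ≤ n := hn.two_le
  have hN : 0 < N := by rw [hNdef]; exact_mod_cast hn.pos
  have hμ0 : (0:ℤ) ≤ μ := by linarith
  have hnonneg : ∀ k, 0 ≤ eeaR N μ k := eeaR_nonneg N μ (le_of_lt hN) hμ0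
  have hRm : 0 < eeaR N μ m := by
    rcases (hnonneg m).lt_or_eq with h' | h'
    · exact h'
    · rw [← h'] at hm; simp at hm; linarith
  have hall : ∀ k, k ≤ m → 0 < eeaR N μ k := by
    intro k hk
    rcases (hnonneg k).lt_or_eq with h' | h'
    · exact h'
    · exact absurd h'.symm (eeaR_ne_zero_mono N μ hN hk (ne_of_gt hRm))
  have hD := eea_det N μ hN hμ0 m hRm
  have hu1 := eeaT_sign N μ (le_of_lt hN) hμ0 m (fun k hk => hall k (by omega))
  have hu2 := eeaT_sign N μ (le_of_lt hN) hμ0 (m+1) (fun k hk => hall k (by omega))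
  have hR1 : 0 ≤ eeaR N μ (m+1) := hnonneg (m+1)
  -- t² ≤ N
  have key : eeaT N μ (m+1)^2 ≤ N := by
    obtain hε | hε : ((-1:ℤ))^m = 1 ∨ ((-1:ℤ))^m = -1 := neg_one_pow_eq_or ℤ m
    all_goals {
      have e1 : ((-1:ℤ))^(m+1) = -(-1)^m := by rw [pow_succ]; ring
      have e2 : ((-1:ℤ))^(m+1+1) = (-1)^m := by rw [pow_add]; ring
      rw [e1, hε] at hu1
      rw [e2, hε] at hu2
      rw [hε] at hD
      have hbnd : eeaR N μ m * eeaT N μ (m+1) ≤ N ∧ 0 ≤ eeaR N μ m * eeaT N μ (m+1) ∨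
          eeaR N μ m * (-eeaT N μ (m+1)) ≤ N ∧ 0 ≤ eeaR N μ m * (-eeaT N μ (m+1)) := by
        first
        | exact Or.inl ⟨by nlinarith [mul_nonneg hR1 (by linarith : (0:ℤ) ≤ -eeaT N μ m)],
            mul_nonneg (le_of_lt hRm) (by linarith)⟩
        | exact Or.inr ⟨by nlinarith [mul_nonneg hR1 (by linarith : (0:ℤ) ≤ eeaT N μ m)],
            mul_nonneg (le_of_lt hRm) (by linarith)⟩
      rcases hbnd with ⟨hle, hge⟩ | ⟨hle, hge⟩ <;>
        nlinarith [sq_nonneg (eeaT N μ (m+1)), mul_self_le_mul_self hge hle]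
    }
  -- T(m+1)^2 ≠ N since n is prime
  have hneq : eeaT N μ (m+1)^2 ≠ N := by
    intro hsq
    have h1 : (eeaT N μ (m+1)).natAbs ^ 2 = n := by
      have h2 := congrArg Int.natAbs hsq
      simpa [Int.natAbs_pow, hNdef] using h2
    have hdvd2 : (eeaT N μ (m+1)).natAbs ∣ n := ⟨(eeaT N μ (m+1)).natAbs, by rw [← h1]; ring⟩
    rcases hn.eq_one_or_self_of_dvd _ hdvd2 with h2 | h2
    · rw [h2] at h1; simp at h1; omega
    · rw [h2] at h1; nlinarith
  have ht2 : eeaT N μ (m+1)^2 < N := lt_of_le_of_ne key hneq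
  -- divisibility
  have hdvdS : N ∣ eeaR N μ (m+1)^2 + eeaT N μ (m+1)^2 := by
    obtain ⟨c, hc⟩ := hμ
    have hb := eea_bezout N μ (m+1)
    refine ⟨N * eeaS N μ (m+1)^2 + 2 * eeaS N μ (m+1) * μ * eeaT N μ (m+1) + eeaT N μ (m+1)^2 * c, ?_⟩
    linear_combination eeaT N μ (m+1)^2 * hc -
      (eeaR N μ (m+1) + N * eeaS N μ (m+1) + μ * eeaT N μ (m+1)) * hb
  -- positivity of the sum
  have hposS : 0 < eeaR N μ (m+1)^2 + eeaT N μ (m+1)^2 := by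
    rcases (add_nonneg (sq_nonneg (eeaR N μ (m+1))) (sq_nonneg (eeaT N μ (m+1)))).lt_or_eq with h' | h'
    · exact h'
    · exfalso
      have hR0 : eeaR N μ (m+1) = 0 := by
        have h3 : eeaR N μ (m+1)^2 = 0 := by
          linarith [sq_nonneg (eeaR N μ (m+1)), sq_nonneg (eeaT N μ (m+1))]
        exact pow_eq_zero_iff (two_ne_zero) |>.mp h3
      have hT0 : eeaT N μ (m+1) = 0 := by
        have h3 : eeaT N μ (m+1)^2 = 0 := by
          linarith [sq_nonneg (eeaR N μ (m+1)), sq_nonneg (eeaT N μ (m+1))]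
        exact pow_eq_zero_iff (two_ne_zero) |>.mp h3
      rw [hR0, hT0] at hD
      obtain hε | hε : ((-1:ℤ))^m = 1 ∨ ((-1:ℤ))^m = -1 := neg_one_pow_eq_or ℤ m <;>
        rw [hε] at hD <;> simp at hD <;> linarith
  obtain ⟨c, hc⟩ := hdvdS
  have hc1 : 1 ≤ c := by
    by_contra hcle
    push_neg at hcle
    have hc0 : c ≤ 0 := by omega
    nlinarith
  have hc2 : c < 2 := by
    by_contra hcge
    push_neg at hcge
    nlinarith
  have hc3 : c = 1 := by omega
  rw [hc, hc3, mul_one]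
end

section
/- Let w and z be complex numbers and ψ a real number with 0 ≤ ψ ≤ π/2. If z = 0, or w = 0, or |arg(w/z)| ≥ ψ (where arg takes values in (−π, π]), then |w − z| ≥ sin ψ · max(|w|, |z|). -/
/-- Key inequality of Lemma 4 ('Use of good j's'): if `z = 0`, or `w = 0`, or the
argument of `w/z` has absolute value at least `ψ` (with `0 ≤ ψ ≤ π/2`), then
`|w − z| ≥ sin ψ · max(|w|, |z|)`. -/
theorem abs_sub_ge_sin_mul_max (w z : ℂ) (ψ : ℝ)
    (hψ0 : 0 ≤ ψ) (hψ2 : ψ ≤ Real.pi / 2)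
    (h : z = 0 ∨ w = 0 ∨ ψ ≤ |Complex.arg (w / z)|) :
    Real.sin ψ * max ‖w‖ ‖z‖ ≤ ‖w - z‖ := by
  have hs1 : Real.sin ψ ≤ 1 := Real.sin_le_one ψ
  have hpi := Real.pi_pos
  have hs0 : 0 ≤ Real.sin ψ :=
    Real.sin_nonneg_of_nonneg_of_le_pi hψ0 (by linarith)
  by_cases hz : z = 0
  · subst hz
    simp only [map_zero, norm_zero, max_eq_left (norm_nonneg w), sub_zero]
    nlinarith [norm_nonneg w]
  by_cases hw : w = 0
  · subst hw
    simp only [map_zero, norm_zero, max_eq_right (norm_nonneg z), zero_sub, norm_neg]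
    nlinarith [norm_nonneg z]
  obtain h | h | h := h
  · exact absurd h hz
  · exact absurd h hw
  set θ := Complex.arg (w / z) with hθdef
  have hwz : w / z ≠ 0 := div_ne_zero hw hz
  have hθpi : |θ| ≤ Real.pi := Complex.abs_arg_le_pi _
  have hcos : Real.cos θ ≤ Real.cos ψ := by
    rw [← Real.cos_abs θ]
    exact Real.cos_le_cos_of_nonneg_of_le_pi hψ0 hθpi h
  have hA : 0 < ‖w‖ := norm_pos_iff.mpr hw
  have hB : 0 < ‖z‖ := norm_pos_iff.mpr hz
  -- cos θ = Re(w * conj z) / (|w| |z|)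
  have hcosarg : Real.cos θ = (w / z).re / ‖w / z‖ := Complex.cos_arg hwz
  have hre : (w / z).re = (w * (starRingEnd ℂ) z).re / Complex.normSq z := by
    rw [Complex.div_re]
    simp only [Complex.mul_re, Complex.conj_re, Complex.conj_im]
    ring
  have habsdiv : ‖w / z‖ = ‖w‖ / ‖z‖ := norm_div w z
  have hR : (w * (starRingEnd ℂ) z).re = ‖w‖ * ‖z‖ * Real.cos θ := by
    rw [hcosarg, hre, habsdiv]
    have hnz : Complex.normSq z = ‖z‖ * ‖z‖ := by
      rw [← Complex.sq_norm]; ring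
    field_simp [hnz]
    rw [hnz]; ring
  -- |w - z|^2 = |w|^2 + |z|^2 - 2 Re(w conj z)
  have hsq : (‖w - z‖)^2 =
      (‖w‖)^2 + (‖z‖)^2 -
        2 * (‖w‖ * ‖z‖ * Real.cos θ) := by
    rw [← hR, Complex.sq_norm, Complex.sq_norm, Complex.sq_norm, Complex.normSq_sub]
  have hkey : (Real.sin ψ * max (‖w‖) (‖z‖))^2 ≤ (‖w - z‖)^2 := by
    rw [hsq]
    have hsc : Real.sin ψ ^ 2 + Real.cos ψ ^ 2 = 1 := Real.sin_sq_add_cos_sq ψ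
    rcases le_total (‖w‖) (‖z‖) with hle | hle
    · rw [max_eq_right hle]
      nlinarith [sq_nonneg (‖w‖ - ‖z‖ * Real.cos ψ),
        mul_le_mul_of_nonneg_left hcos (le_of_lt (mul_pos hA hB))]
    · rw [max_eq_left hle]
      nlinarith [sq_nonneg (‖z‖ - ‖w‖ * Real.cos ψ),
        mul_le_mul_of_nonneg_left hcos (le_of_lt (mul_pos hA hB))]
  have h1 : 0 ≤ Real.sin ψ * max (‖w‖) (‖z‖) := by positivity
  nlinarith [norm_nonneg (w - z)]
end

section
/- Let p be a point of the closed unit square in the complex plane with vertex set V = {0, 1, i, 1+i}, and suppose p is not one of the four vertices. Then there exist distinct vertices v₁, v₂ ∈ V such that |v₁ − p| ≤ 1/√2 and |arg((v₁ − p)/(v₂ − p))| ≥ 2.458 (where arg takes values in (−π, π]); in particular the angle subtended at p by v₁ and v₂ is at least 2.458 > 2·arctan 2. -/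
open Real

set_option maxHeartbeats 1600000

/-- numeric bound: `cos 2.458 ≥ -0.77535`. -/
lemma cos_2458_bound : -(15507/20000 : ℝ) ≤ Real.cos 2.458 := by
  have hπ := Real.pi_gt_d6
  set u : ℝ := 85449/1000000 with hu_def
  have hu : |u| ≤ 1 := by rw [abs_of_nonneg (by norm_num)]; norm_num
  have hs := Real.sin_bound hu
  have hsl : (8534223/100000000 : ℝ) ≤ Real.sin u := by
    have h1 := (abs_le.1 hs).1
    rw [abs_of_nonneg (by norm_num : (0:ℝ) ≤ u)] at h1
    have : u - u^3/6 - u^4*(5/96) ≥ 8534223/100000000 := by norm_num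
    linarith
  have hsu : Real.sin u ≤ 1 := Real.sin_le_one u
  have c2 : Real.cos (2*u) = 1 - 2*Real.sin u^2 := by
    have := Real.sin_sq_add_cos_sq u
    rw [Real.cos_two_mul]; linarith
  have h2u : Real.cos (2*u) ≤ 98543357/100000000 := by
    rw [c2]; nlinarith [hsl]
  have h2unn : 0 ≤ Real.cos (2*u) := by
    apply Real.cos_nonneg_of_neg_pi_div_two_le_of_le <;> nlinarith
  have c4 : Real.cos (4*u) = 2*Real.cos (2*u)^2 - 1 := by
    have : (4:ℝ)*u = 2*(2*u) := by ring
    rw [this, Real.cos_two_mul]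
  have h4u : Real.cos (4*u) ≤ 94215865/100000000 := by
    rw [c4]; nlinarith [pow_le_pow_left₀ h2unn h2u 2]
  have h4unn : 0 ≤ Real.cos (4*u) := by
    apply Real.cos_nonneg_of_neg_pi_div_two_le_of_le <;> nlinarith
  have c8 : Real.cos (8*u) = 2*Real.cos (4*u)^2 - 1 := by
    have : (8:ℝ)*u = 2*(4*u) := by ring
    rw [this, Real.cos_two_mul]
  have h8u : Real.cos (8*u) ≤ 15507/20000 := by
    rw [c8]; nlinarith [pow_le_pow_left₀ h4unn h4u 2]
  have hmono : Real.cos (π - 2.458) ≤ Real.cos (8*u) := by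
    apply Real.cos_le_cos_of_nonneg_of_le_pi
    · norm_num
    · linarith
    · norm_num; linarith
  rw [Real.cos_pi_sub] at hmono
  linarith

/-- From a dot-product bound, a lower bound on the unsigned angle. -/
lemma angle_ge_of (z w : ℂ) (hz : 0 < z.re^2+z.im^2) (hw : 0 < w.re^2+w.im^2)
    (hdot : z.re*w.re + z.im*w.im ≤ 0)
    (hquad : (240467049/400000000 : ℝ) * ((z.re^2+z.im^2)*(w.re^2+w.im^2))
      ≤ (z.re*w.re+z.im*w.im)^2) :
    (2.458:ℝ) ≤ |(z/w).arg| := by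
  have hz0 : z ≠ 0 := by intro h; rw [h] at hz; simp at hz
  have hw0 : w ≠ 0 := by intro h; rw [h] at hw; simp at hw
  have hzw : z/w ≠ 0 := div_ne_zero hz0 hw0
  have hA : 0 < ‖z‖ := norm_pos_iff.mpr hz0
  have hB : 0 < ‖w‖ := norm_pos_iff.mpr hw0
  have hA2 : (‖z‖)^2 = z.re^2+z.im^2 := by
    rw [Complex.sq_norm, Complex.normSq_apply]; ring
  have hB2 : (‖w‖)^2 = w.re^2+w.im^2 := by
    rw [Complex.sq_norm, Complex.normSq_apply]; ring
  have hprod : (‖z‖ * ‖w‖)^2 = (z.re^2+z.im^2)*(w.re^2+w.im^2) := by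
    rw [mul_pow, hA2, hB2]
  have key : ‖z‖ * ‖w‖ * (15507/20000) ≤ -(z.re*w.re+z.im*w.im) := by
    nlinarith [hprod, hquad, hdot, mul_pos hA hB]
  have hcosle : Real.cos ((z/w).arg) ≤ -(15507/20000 : ℝ) := by
    rw [Complex.cos_arg hzw, norm_div, Complex.div_re]
    have hnsq : Complex.normSq w = (‖w‖)^2 := (Complex.sq_norm w).symm
    have heq : (z.re * w.re / Complex.normSq w + z.im * w.im / Complex.normSq w)
        / (‖z‖ / ‖w‖)
        = (z.re*w.re + z.im*w.im) / (‖z‖ * ‖w‖) := by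
      rw [hnsq]; field_simp
    rw [heq, div_le_iff₀ (mul_pos hA hB)]
    linarith [key]
  have hπ := Real.pi_gt_d6
  have hmem1 : |(z/w).arg| ∈ Set.Icc 0 π := ⟨abs_nonneg _, Complex.abs_arg_le_pi _⟩
  have hmem2 : (2.458:ℝ) ∈ Set.Icc 0 π := ⟨by norm_num, by linarith⟩
  by_contra hcon
  push_neg at hcon
  have hlt := Real.strictAntiOn_cos hmem1 hmem2 hcon
  rw [Real.cos_abs] at hlt
  linarith [cos_2458_bound]

lemma abs_le_inv_sqrt2 (z : ℂ) (h : z.re^2+z.im^2 ≤ 1/2) :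
    ‖z‖ ≤ 1/Real.sqrt 2 := by
  have h2 : (1:ℝ)/Real.sqrt 2 = Real.sqrt (1/2) := by
    rw [one_div, one_div, ← Real.sqrt_inv]
  rw [h2, Complex.norm_def]
  apply Real.sqrt_le_sqrt
  rw [Complex.normSq_apply]; nlinarith [h]

lemma leaf1 (z w : ℂ) (a b : ℝ)
    (e1 : z.re^2+z.im^2 = a^2+b^2)
    (e2 : w.re^2+w.im^2 = (1-a)^2+b^2)
    (e3 : z.re*w.re + z.im*w.im = -(a*(1-a) - b^2))
    (hb : 0 ≤ b) (hbt : b ≤ 3553/10000*a) (ha2 : a ≤ 1/2) (ha0 : 0 < a) :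
    ‖z‖ ≤ 1/Real.sqrt 2 ∧ (2.458:ℝ) ≤ |(z/w).arg| := by
  have ha : 0 ≤ a := le_of_lt ha0
  have hdot : b^2 ≤ a*(1-a) := by nlinarith
  have hquad : (240467049/400000000 : ℝ)*((a^2+b^2)*((1-a)^2+b^2)) ≤ (a*(1-a) - b^2)^2 := by
    nlinarith [sq_nonneg (a-2*b), sq_nonneg b, mul_nonneg ha hb, sq_nonneg (1/2-a),
      mul_nonneg (mul_nonneg ha ha) hb, mul_nonneg hb (sub_nonneg.2 ha2),
      mul_nonneg (sub_nonneg.2 hbt) (sub_nonneg.2 ha2),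
      mul_nonneg (mul_nonneg (sub_nonneg.2 hbt) (sub_nonneg.2 ha2)) hb,
      mul_nonneg (mul_nonneg (sub_nonneg.2 hbt) (sub_nonneg.2 ha2)) ha,
      mul_nonneg (mul_nonneg (sub_nonneg.2 hbt) (sub_nonneg.2 hbt)) ha,
      sq_nonneg (3553/10000*a - b), sq_nonneg (a*(1-a)-b^2)]
  constructor
  · apply abs_le_inv_sqrt2; rw [e1]; nlinarith
  · apply angle_ge_of
    · rw [e1]; nlinarith [sq_nonneg b]
    · rw [e2]; nlinarith [sq_nonneg b]
    · rw [e3]; linarith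
    · rw [e1, e2, e3]; nlinarith [hquad]

lemma leaf2 (z w : ℂ) (a b : ℝ)
    (e1 : z.re^2+z.im^2 = a^2+b^2)
    (e2 : w.re^2+w.im^2 = (1-a)^2+(1-b)^2)
    (e3 : z.re*w.re + z.im*w.im = -(a*(1-a) + b*(1-b)))
    (hbt : 3553/10000*a ≤ b) (hba : b ≤ a) (ha2 : a ≤ 1/2) (ha0 : 0 < a) :
    ‖z‖ ≤ 1/Real.sqrt 2 ∧ (2.458:ℝ) ≤ |(z/w).arg| := by
  have hb : 0 ≤ b := by nlinarith
  have ha : 0 ≤ a := le_of_lt ha0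
  have hquad : (240467049/400000000 : ℝ)*((a^2+b^2)*((1-a)^2+(1-b)^2))
      ≤ (a*(1-a) + b*(1-b))^2 := by
    nlinarith [mul_nonneg ha hb, sq_nonneg (a-b), sq_nonneg (a+b), sq_nonneg (1/2-a),
      mul_nonneg (sub_nonneg.2 hbt) (sub_nonneg.2 ha2),
      mul_nonneg (sub_nonneg.2 hba) (sub_nonneg.2 ha2),
      mul_nonneg (mul_nonneg (sub_nonneg.2 hbt) (sub_nonneg.2 ha2)) hb,
      mul_nonneg (mul_nonneg (sub_nonneg.2 hbt) (sub_nonneg.2 ha2)) ha,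
      mul_nonneg (mul_nonneg (sub_nonneg.2 hbt) (sub_nonneg.2 hbt)) ha,
      mul_nonneg (mul_nonneg (sub_nonneg.2 hba) (sub_nonneg.2 ha2)) ha,
      mul_nonneg (sub_nonneg.2 hbt) (sub_nonneg.2 hba)]
  constructor
  · apply abs_le_inv_sqrt2; rw [e1]; nlinarith
  · apply angle_ge_of
    · rw [e1]; nlinarith [sq_nonneg b]
    · rw [e2]; nlinarith [sq_nonneg (1-b)]
    · rw [e3]; nlinarith
    · rw [e1, e2, e3]; nlinarith [hquad]

/-- Lemma 3 of the paper (a geometric property of squares): for every point `p` of the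
closed unit square with vertices `0, 1, i, 1+i` that is not a vertex, there are two
distinct vertices `v₁, v₂` with `|v₁ − p| ≤ 1/√2` such that the angle `∠ v₁ p v₂` is at
least `2.458`; moreover `2.458 > 2·arctan 2`. -/
theorem unit_square_angle_property (p : ℂ)
    (h1 : 0 ≤ p.re) (h2 : p.re ≤ 1) (h3 : 0 ≤ p.im) (h4 : p.im ≤ 1)
    (hp : p ∉ ({0, 1, Complex.I, 1 + Complex.I} : Set ℂ)) :
    (∃ v₁ ∈ ({0, 1, Complex.I, 1 + Complex.I} : Set ℂ),
      ∃ v₂ ∈ ({0, 1, Complex.I, 1 + Complex.I} : Set ℂ),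
        v₁ ≠ v₂ ∧
        ‖v₁ - p‖ ≤ 1 / Real.sqrt 2 ∧
        (2.458 : ℝ) ≤ |Complex.arg ((v₁ - p) / (v₂ - p))|) ∧
    2 * Real.arctan 2 < (2.458 : ℝ) := by
  constructor
  · simp only [Set.mem_insert_iff, Set.mem_singleton_iff, not_or] at hp
    obtain ⟨hp0, hp1, hpI, hpII⟩ := hp
    rcases le_total p.re (1/2) with hx | hx <;> rcases le_total p.im (1/2) with hy | hy
    · -- quadrant near 0
      rcases le_total p.im p.re with hxy | hxy
      · -- O1
        -- O1: 0 ≤ y ≤ x ≤ 1/2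
        have ha0 : 0 < p.re := by
          rcases h1.lt_or_eq with h | h
          · exact h
          · exact absurd (Complex.ext (by simp only [Complex.zero_re]; linarith)
              (by simp only [Complex.zero_im]; linarith)) hp0
        rcases le_total (p.im) (3553/10000*(p.re)) with hc | hc
        · have L := leaf1 (0-p) (1-p) (p.re) (p.im) (by simp only [Complex.sub_re, Complex.sub_im, Complex.add_re, Complex.add_im, Complex.one_re, Complex.one_im, Complex.I_re, Complex.I_im, Complex.zero_re, Complex.zero_im]; ring) (by simp only [Complex.sub_re, Complex.sub_im, Complex.add_re, Complex.add_im, Complex.one_re, Complex.one_im, Complex.I_re, Complex.I_im, Complex.zero_re, Complex.zero_im]; ring) (by simp only [Complex.sub_re, Complex.sub_im, Complex.add_re, Complex.add_im, Complex.one_re, Complex.one_im, Complex.I_re, Complex.I_im, Complex.zero_re, Complex.zero_im]; ring) h3 hc hx ha0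
          exact ⟨0, by simp, 1, by simp, by norm_num [Complex.ext_iff], L.1, L.2⟩
        · have L := leaf2 (0-p) (1+Complex.I-p) (p.re) (p.im) (by simp only [Complex.sub_re, Complex.sub_im, Complex.add_re, Complex.add_im, Complex.one_re, Complex.one_im, Complex.I_re, Complex.I_im, Complex.zero_re, Complex.zero_im]; ring) (by simp only [Complex.sub_re, Complex.sub_im, Complex.add_re, Complex.add_im, Complex.one_re, Complex.one_im, Complex.I_re, Complex.I_im, Complex.zero_re, Complex.zero_im]; ring) (by simp only [Complex.sub_re, Complex.sub_im, Complex.add_re, Complex.add_im, Complex.one_re, Complex.one_im, Complex.I_re, Complex.I_im, Complex.zero_re, Complex.zero_im]; ring) hc hxy hx ha0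
          exact ⟨0, by simp, 1+Complex.I, by simp, by norm_num [Complex.ext_iff], L.1, L.2⟩
      · -- O2
        -- O2: 0 ≤ x ≤ y ≤ 1/2
        have ha0 : 0 < p.im := by
          rcases h3.lt_or_eq with h | h
          · exact h
          · exact absurd (Complex.ext (by simp only [Complex.zero_re]; linarith)
              (by simp only [Complex.zero_im]; linarith)) hp0
        rcases le_total (p.re) (3553/10000*(p.im)) with hc | hc
        · have L := leaf1 (0-p) (Complex.I-p) (p.im) (p.re) (by simp only [Complex.sub_re, Complex.sub_im, Complex.add_re, Complex.add_im, Complex.one_re, Complex.one_im, Complex.I_re, Complex.I_im, Complex.zero_re, Complex.zero_im]; ring) (by simp only [Complex.sub_re, Complex.sub_im, Complex.add_re, Complex.add_im, Complex.one_re, Complex.one_im, Complex.I_re, Complex.I_im, Complex.zero_re, Complex.zero_im]; ring) (by simp only [Complex.sub_re, Complex.sub_im, Complex.add_re, Complex.add_im, Complex.one_re, Complex.one_im, Complex.I_re, Complex.I_im, Complex.zero_re, Complex.zero_im]; ring) h1 hc hy ha0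
          exact ⟨0, by simp, Complex.I, by simp, by norm_num [Complex.ext_iff], L.1, L.2⟩
        · have L := leaf2 (0-p) (1+Complex.I-p) (p.im) (p.re) (by simp only [Complex.sub_re, Complex.sub_im, Complex.add_re, Complex.add_im, Complex.one_re, Complex.one_im, Complex.I_re, Complex.I_im, Complex.zero_re, Complex.zero_im]; ring) (by simp only [Complex.sub_re, Complex.sub_im, Complex.add_re, Complex.add_im, Complex.one_re, Complex.one_im, Complex.I_re, Complex.I_im, Complex.zero_re, Complex.zero_im]; ring) (by simp only [Complex.sub_re, Complex.sub_im, Complex.add_re, Complex.add_im, Complex.one_re, Complex.one_im, Complex.I_re, Complex.I_im, Complex.zero_re, Complex.zero_im]; ring) hc hxy hy ha0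
          exact ⟨0, by simp, 1+Complex.I, by simp, by norm_num [Complex.ext_iff], L.1, L.2⟩
    · -- quadrant near i : x ≤ 1/2 ≤ y
      rcases le_total p.re (1-p.im) with hxy | hxy
      · -- O6
        -- O6: 0 ≤ x ≤ 1-y ≤ 1/2
        have ha0 : 0 < 1 - p.im := by
          rcases h4.lt_or_eq with h | h
          · linarith
          · exact absurd (Complex.ext (by simp only [Complex.I_re]; linarith)
              (by simp only [Complex.I_im]; linarith)) hpI
        rcases le_total (p.re) (3553/10000*(1-p.im)) with hc | hc
        · have L := leaf1 (Complex.I-p) (0-p) (1-p.im) (p.re) (by simp only [Complex.sub_re, Complex.sub_im, Complex.add_re, Complex.add_im, Complex.one_re, Complex.one_im, Complex.I_re, Complex.I_im, Complex.zero_re, Complex.zero_im]; ring) (by simp only [Complex.sub_re, Complex.sub_im, Complex.add_re, Complex.add_im, Complex.one_re, Complex.one_im, Complex.I_re, Complex.I_im, Complex.zero_re, Complex.zero_im]; ring) (by simp only [Complex.sub_re, Complex.sub_im, Complex.add_re, Complex.add_im, Complex.one_re, Complex.one_im, Complex.I_re, Complex.I_im, Complex.zero_re, Complex.zero_im]; ring)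 h1 hc (by linarith) ha0
          exact ⟨Complex.I, by simp, 0, by simp, by norm_num [Complex.ext_iff], L.1, L.2⟩
        · have L := leaf2 (Complex.I-p) (1-p) (1-p.im) (p.re) (by simp only [Complex.sub_re, Complex.sub_im, Complex.add_re, Complex.add_im, Complex.one_re, Complex.one_im, Complex.I_re, Complex.I_im, Complex.zero_re, Complex.zero_im]; ring) (by simp only [Complex.sub_re, Complex.sub_im, Complex.add_re, Complex.add_im, Complex.one_re, Complex.one_im, Complex.I_re, Complex.I_im, Complex.zero_re, Complex.zero_im]; ring) (by simp only [Complex.sub_re, Complex.sub_im, Complex.add_re, Complex.add_im, Complex.one_re, Complex.one_im, Complex.I_re, Complex.I_im, Complex.zero_re, Complex.zero_im]; ring) hc hxy (by linarith) ha0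
          exact ⟨Complex.I, by simp, 1, by simp, by norm_num [Complex.ext_iff], L.1, L.2⟩
      · -- O5
        -- O5: 0 ≤ 1-y ≤ x ≤ 1/2
        have ha0 : 0 < p.re := by
          rcases h1.lt_or_eq with h | h
          · exact h
          · exact absurd (Complex.ext (by simp only [Complex.I_re]; linarith)
              (by simp only [Complex.I_im]; linarith)) hpI
        rcases le_total (1-p.im) (3553/10000*(p.re)) with hc | hc
        · have L := leaf1 (Complex.I-p) (1+Complex.I-p) (p.re) (1-p.im) (by simp only [Complex.sub_re, Complex.sub_im, Complex.add_re, Complex.add_im, Complex.one_re, Complex.one_im, Complex.I_re, Complex.I_im, Complex.zero_re, Complex.zero_im]; ring) (by simp only [Complex.sub_re, Complex.sub_im, Complex.add_re, Complex.add_im, Complex.one_re, Complex.one_im, Complex.I_re, Complex.I_im, Complex.zero_re, Complex.zero_im]; ring) (by simp only [Complex.sub_re, Complex.sub_im, Complex.add_re, Complex.add_im, Complex.one_re, Complex.one_im, Complex.I_re, Complex.I_im, Complex.zero_re, Complex.zero_im]; ring) (by linarith) hc hx ha0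
          exact ⟨Complex.I, by simp, 1+Complex.I, by simp, by norm_num [Complex.ext_iff], L.1, L.2⟩
        · have L := leaf2 (Complex.I-p) (1-p) (p.re) (1-p.im) (by simp only [Complex.sub_re, Complex.sub_im, Complex.add_re, Complex.add_im, Complex.one_re, Complex.one_im, Complex.I_re, Complex.I_im, Complex.zero_re, Complex.zero_im]; ring) (by simp only [Complex.sub_re, Complex.sub_im, Complex.add_re, Complex.add_im, Complex.one_re, Complex.one_im, Complex.I_re, Complex.I_im, Complex.zero_re, Complex.zero_im]; ring) (by simp only [Complex.sub_re, Complex.sub_im, Complex.add_re, Complex.add_im, Complex.one_re, Complex.one_im, Complex.I_re, Complex.I_im, Complex.zero_re, Complex.zero_im]; ring) hc hxy hx ha0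
          exact ⟨Complex.I, by simp, 1, by simp, by norm_num [Complex.ext_iff], L.1, L.2⟩
    · -- quadrant near 1 : y ≤ 1/2 ≤ x
      rcases le_total p.im (1-p.re) with hxy | hxy
      · -- O3
        -- O3: 0 ≤ y ≤ 1-x ≤ 1/2
        have ha0 : 0 < 1 - p.re := by
          rcases h2.lt_or_eq with h | h
          · linarith
          · exact absurd (Complex.ext (by simp only [Complex.one_re]; linarith)
              (by simp only [Complex.one_im]; linarith)) hp1
        rcases le_total (p.im) (3553/10000*(1-p.re)) with hc | hc
        · have L := leaf1 (1-p) (0-p) (1-p.re) (p.im) (by simp only [Complex.sub_re, Complex.sub_im, Complex.add_re, Complex.add_im, Complex.one_re, Complex.one_im, Complex.I_re, Complex.I_im, Complex.zero_re, Complex.zero_im]; ring) (by simp only [Complex.sub_re, Complex.sub_im, Complex.add_re, Complex.add_im, Complex.one_re, Complex.one_im, Complex.I_re, Complex.I_im, Complex.zero_re, Complex.zero_im]; ring) (by simp only [Complex.sub_re, Complex.sub_im, Complex.add_re, Complex.add_im, Complex.one_re, Complex.one_im, Complex.I_re, Complex.I_im, Complex.zero_re, Complex.zero_im]; ring) h3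 hc (by linarith) ha0
          exact ⟨1, by simp, 0, by simp, by norm_num [Complex.ext_iff], L.1, L.2⟩
        · have L := leaf2 (1-p) (Complex.I-p) (1-p.re) (p.im) (by simp only [Complex.sub_re, Complex.sub_im, Complex.add_re, Complex.add_im, Complex.one_re, Complex.one_im, Complex.I_re, Complex.I_im, Complex.zero_re, Complex.zero_im]; ring) (by simp only [Complex.sub_re, Complex.sub_im, Complex.add_re, Complex.add_im, Complex.one_re, Complex.one_im, Complex.I_re, Complex.I_im, Complex.zero_re, Complex.zero_im]; ring) (by simp only [Complex.sub_re, Complex.sub_im, Complex.add_re, Complex.add_im, Complex.one_re, Complex.one_im, Complex.I_re, Complex.I_im, Complex.zero_re, Complex.zero_im]; ring) hc hxy (by linarith) ha0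
          exact ⟨1, by simp, Complex.I, by simp, by norm_num [Complex.ext_iff], L.1, L.2⟩
      · -- O4
        -- O4: 0 ≤ 1-x ≤ y ≤ 1/2
        have ha0 : 0 < p.im := by
          rcases h3.lt_or_eq with h | h
          · exact h
          · exact absurd (Complex.ext (by simp only [Complex.one_re]; linarith)
              (by simp only [Complex.one_im]; linarith)) hp1
        rcases le_total (1-p.re) (3553/10000*(p.im)) with hc | hc
        · have L := leaf1 (1-p) (1+Complex.I-p) (p.im) (1-p.re) (by simp only [Complex.sub_re, Complex.sub_im, Complex.add_re, Complex.add_im, Complex.one_re, Complex.one_im, Complex.I_re, Complex.I_im, Complex.zero_re, Complex.zero_im]; ring) (by simp only [Complex.sub_re, Complex.sub_im, Complex.add_re, Complex.add_im, Complex.one_re, Complex.one_im, Complex.I_re, Complex.I_im, Complex.zero_re, Complex.zero_im]; ring) (by simp only [Complex.sub_re, Complex.sub_im, Complex.add_re, Complex.add_im, Complex.one_re, Complex.one_im, Complex.I_re, Complex.I_im, Complex.zero_re, Complex.zero_im]; ring) (by linarith) hc hy ha0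
          exact ⟨1, by simp, 1+Complex.I, by simp, by norm_num [Complex.ext_iff], L.1, L.2⟩
        · have L := leaf2 (1-p) (Complex.I-p) (p.im) (1-p.re) (by simp only [Complex.sub_re, Complex.sub_im, Complex.add_re, Complex.add_im, Complex.one_re, Complex.one_im, Complex.I_re, Complex.I_im, Complex.zero_re, Complex.zero_im]; ring) (by simp only [Complex.sub_re, Complex.sub_im, Complex.add_re, Complex.add_im, Complex.one_re, Complex.one_im, Complex.I_re, Complex.I_im, Complex.zero_re, Complex.zero_im]; ring) (by simp only [Complex.sub_re, Complex.sub_im, Complex.add_re, Complex.add_im, Complex.one_re, Complex.one_im, Complex.I_re, Complex.I_im, Complex.zero_re, Complex.zero_im]; ring) hc hxy hy ha0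
          exact ⟨1, by simp, Complex.I, by simp, by norm_num [Complex.ext_iff], L.1, L.2⟩
    · -- quadrant near 1+i : 1/2 ≤ x, 1/2 ≤ y
      rcases le_total p.re p.im with hxy' | hxy'
      · -- O7
        have hxy : 1 - p.im ≤ 1 - p.re := by linarith
        -- O7: 0 ≤ 1-y ≤ 1-x ≤ 1/2
        have ha0 : 0 < 1 - p.re := by
          rcases h2.lt_or_eq with h | h
          · linarith
          · exact absurd (Complex.ext
              (by simp only [Complex.add_re, Complex.one_re, Complex.I_re]; linarith)
              (by simp only [Complex.add_im, Complex.one_im, Complex.I_im]; linarith)) hpII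
        rcases le_total (1-p.im) (3553/10000*(1-p.re)) with hc | hc
        · have L := leaf1 (1+Complex.I-p) (Complex.I-p) (1-p.re) (1-p.im) (by simp only [Complex.sub_re, Complex.sub_im, Complex.add_re, Complex.add_im, Complex.one_re, Complex.one_im, Complex.I_re, Complex.I_im, Complex.zero_re, Complex.zero_im]; ring) (by simp only [Complex.sub_re, Complex.sub_im, Complex.add_re, Complex.add_im, Complex.one_re, Complex.one_im, Complex.I_re, Complex.I_im, Complex.zero_re, Complex.zero_im]; ring) (by simp only [Complex.sub_re, Complex.sub_im, Complex.add_re, Complex.add_im, Complex.one_re, Complex.one_im, Complex.I_re, Complex.I_im, Complex.zero_re, Complex.zero_im]; ring) (by linarith) hc (by linarith) ha0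
          exact ⟨1+Complex.I, by simp, Complex.I, by simp, by norm_num [Complex.ext_iff], L.1, L.2⟩
        · have L := leaf2 (1+Complex.I-p) (0-p) (1-p.re) (1-p.im) (by simp only [Complex.sub_re, Complex.sub_im, Complex.add_re, Complex.add_im, Complex.one_re, Complex.one_im, Complex.I_re, Complex.I_im, Complex.zero_re, Complex.zero_im]; ring) (by simp only [Complex.sub_re, Complex.sub_im, Complex.add_re, Complex.add_im, Complex.one_re, Complex.one_im, Complex.I_re, Complex.I_im, Complex.zero_re, Complex.zero_im]; ring) (by simp only [Complex.sub_re, Complex.sub_im, Complex.add_re, Complex.add_im, Complex.one_re, Complex.one_im, Complex.I_re, Complex.I_im, Complex.zero_re, Complex.zero_im]; ring) hc hxy (by linarith) ha0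
          exact ⟨1+Complex.I, by simp, 0, by simp, by norm_num [Complex.ext_iff], L.1, L.2⟩
      · -- O8
        have hxy : 1 - p.re ≤ 1 - p.im := by linarith
        -- O8: 0 ≤ 1-x ≤ 1-y ≤ 1/2
        have ha0 : 0 < 1 - p.im := by
          rcases h4.lt_or_eq with h | h
          · linarith
          · exact absurd (Complex.ext
              (by simp only [Complex.add_re, Complex.one_re, Complex.I_re]; linarith)
              (by simp only [Complex.add_im, Complex.one_im, Complex.I_im]; linarith)) hpII
        rcases le_total (1-p.re) (3553/10000*(1-p.im)) with hc | hc
        · have L := leaf1 (1+Complex.I-p) (1-p) (1-p.im) (1-p.re) (by simp only [Complex.sub_re, Complex.sub_im, Complex.add_re, Complex.add_im, Complex.one_re, Complex.one_im, Complex.I_re, Complex.I_im, Complex.zero_re, Complex.zero_im]; ring) (by simp only [Complex.sub_re, Complex.sub_im, Complex.add_re, Complex.add_im, Complex.one_re, Complex.one_im, Complex.I_re, Complex.I_im, Complex.zero_re, Complex.zero_im]; ring) (by simp only [Complex.sub_re, Complex.sub_im, Complex.add_re, Complex.add_im, Complex.one_re, Complex.one_im, Complex.I_re, Complex.I_im,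 Complex.zero_re, Complex.zero_im]; ring) (by linarith) hc (by linarith) ha0
          exact ⟨1+Complex.I, by simp, 1, by simp, by norm_num [Complex.ext_iff], L.1, L.2⟩
        · have L := leaf2 (1+Complex.I-p) (0-p) (1-p.im) (1-p.re) (by simp only [Complex.sub_re, Complex.sub_im, Complex.add_re, Complex.add_im, Complex.one_re, Complex.one_im, Complex.I_re, Complex.I_im, Complex.zero_re, Complex.zero_im]; ring) (by simp only [Complex.sub_re, Complex.sub_im, Complex.add_re, Complex.add_im, Complex.one_re, Complex.one_im, Complex.I_re, Complex.I_im, Complex.zero_re, Complex.zero_im]; ring) (by simp only [Complex.sub_re, Complex.sub_im, Complex.add_re, Complex.add_im, Complex.one_re, Complex.one_im, Complex.I_re, Complex.I_im, Complex.zero_re, Complex.zero_im]; ring) hc hxy (by linarith) ha0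
          exact ⟨1+Complex.I, by simp, 0, by simp, by norm_num [Complex.ext_iff], L.1, L.2⟩
  · -- 2 * arctan 2 < 2.458
    have hπu := Real.pi_lt_d6
    have hπl := Real.pi_gt_d6
    have habs : |(7:ℝ)/20| = 7/20 := by rw [abs_of_nonneg]; norm_num
    have hcb := (abs_le.1 (Real.cos_bound (by rw [habs]; norm_num))).1
    rw [habs] at hcb
    have hc : (9:ℝ)/10 ≤ Real.cos (7/20) := by nlinarith [hcb]
    have htan : Real.tan (7/20) < 2⁻¹ := by
      rw [Real.tan_eq_sin_div_cos]
      have hs := Real.sin_lt (show (0:ℝ) < 7/20 by norm_num)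
      rw [div_lt_iff₀ (by linarith)]
      linarith
    have harc : (7:ℝ)/20 < Real.arctan 2⁻¹ := by
      have heq : Real.arctan (Real.tan (7/20)) = 7/20 :=
        Real.arctan_tan (by linarith) (by linarith)
      calc (7:ℝ)/20 = Real.arctan (Real.tan (7/20)) := heq.symm
        _ < Real.arctan 2⁻¹ := Real.arctan_strictMono htan
    have hinv : Real.arctan 2⁻¹ = π/2 - Real.arctan 2 :=
      Real.arctan_inv_of_pos (by norm_num)
    linarith
end

section
/- Let θ be a real number with sin(θ/2) ≠ 0, and set u = cos(θ/2)/sin(θ/2). If 2u³ − 3u² − 2u + 1 = 0, then θ/π is irrational. -/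
open Polynomial IntermediateField Module Complex

section ThetaAux

private lemma no_rat_root (r : ℚ) : 2 * r ^ 3 - 3 * r ^ 2 - 2 * r + 1 ≠ 0 := by
  intro h
  set s : ℚ := 2 * r with hs
  have hseq : s ^ 3 - 3 * s ^ 2 - 4 * s + 4 = 0 := by
    rw [hs]; linear_combination 4 * h
  set a : ℤ := s.num with ha
  set d : ℤ := (s.den : ℤ) with hd
  have hdne : (d : ℚ) ≠ 0 := by
    rw [hd]; exact_mod_cast s.den_nz
  have hsad : s = (a : ℚ) / (d : ℚ) := by rw [ha, hd]; push_cast; exact (Rat.num_div_den s).symm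
  have hna : (a : ℚ) = s * (d : ℚ) := by
    rw [hsad]; field_simp
  have key : (a : ℚ) ^ 3 - 3 * (a:ℚ) ^ 2 * d - 4 * (a:ℚ) * d ^ 2 + 4 * (d:ℚ) ^ 3 = 0 := by
    rw [hna]; linear_combination (d:ℚ)^3 * hseq
  have hz : a ^ 3 - 3 * a ^ 2 * d - 4 * a * d ^ 2 + 4 * d ^ 3 = 0 := by exact_mod_cast key
  have hdvd : d ∣ a ^ 3 := ⟨3 * a ^ 2 + 4 * a * d - 4 * d ^ 2, by linarith⟩
  have hden1 : s.den = 1 := by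
    have h1 : s.den ∣ a.natAbs ^ 3 := by
      have := Int.natAbs_dvd_natAbs.mpr hdvd
      simpa [hd, Int.natAbs_pow] using this
    exact ((s.reduced.symm).pow_right 3).eq_one_of_dvd h1
  have hsa : s = (a : ℚ) := by rw [hsad, hd, hden1]; simp
  have hza : a ^ 3 - 3 * a ^ 2 - 4 * a + 4 = 0 := by
    rw [hsa] at hseq; exact_mod_cast hseq
  have hdvd4 : a ∣ 4 := ⟨-a ^ 2 + 3 * a + 4, by linarith⟩
  have h4 : a ≤ 4 := Int.le_of_dvd (by norm_num) hdvd4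
  have h4' : -4 ≤ a := by
    have := Int.le_of_dvd (show (0:ℤ) < 4 by norm_num) (Int.neg_dvd.mpr hdvd4)
    linarith
  interval_cases a <;> norm_num at hza


private noncomputable def gcub : Polynomial ℚ := X ^ 3 - C (3/2) * X ^ 2 - X + C (1/2)

private lemma gcub_natDegree : gcub.natDegree = 3 := by
  unfold gcub; compute_degree!

private lemma gcub_monic : gcub.Monic := by
  unfold gcub; monicity!


private lemma gcub_eval' (K : Type*) [Field K] [CharZero K] (x : K) :
    aeval x gcub = x ^ 3 - (3/2 : K) * x ^ 2 - x + 1/2 := by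
  unfold gcub
  simp

private lemma gcub_irred : Irreducible gcub := by
  rw [gcub_monic.irreducible_iff_roots_eq_zero_of_degree_le_three
    (by rw [gcub_natDegree]; norm_num) (by rw [gcub_natDegree])]
  by_contra hne
  obtain ⟨r, hr⟩ := Multiset.exists_mem_of_ne_zero hne
  rw [mem_roots gcub_monic.ne_zero] at hr
  have h0 : aeval r gcub = 0 := by simpa using hr
  rw [show aeval r gcub = _ from gcub_eval' ℚ r] at h0
  exact no_rat_root r (by linear_combination 2 * h0)

/-- The reals as an intermediate field of `ℚ ≤ ℂ`. -/
private noncomputable def realIF : IntermediateField ℚ ℂ :=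
  { Complex.ofRealHom.fieldRange with
    algebraMap_mem' := fun q => ⟨(q : ℝ), by simp⟩ }

private lemma mem_realIF {x : ℂ} (h : x ∈ realIF) : ∃ y : ℝ, (y : ℂ) = x := h

private lemma ofReal_mem_realIF (y : ℝ) : (y : ℂ) ∈ realIF := ⟨y, rfl⟩

private lemma gcub_eval (x : ℂ) :
    Polynomial.aeval x gcub = x ^ 3 - (3/2 : ℂ) * x ^ 2 - x + 1/2 :=
  gcub_eval' ℂ x

end ThetaAux

set_option maxHeartbeats 3200000
set_option synthInstance.maxHeartbeats 1000000

open Polynomial IntermediateField Module Complex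

/-- If `cot(θ/2)` is a root of `2u³ − 3u² − 2u + 1`, then `θ/π` is irrational. -/
theorem theta_div_pi_irrational (θ : ℝ) (hs : Real.sin (θ / 2) ≠ 0)
    (u : ℝ) (hu : u = Real.cos (θ / 2) / Real.sin (θ / 2))
    (hroot : 2 * u ^ 3 - 3 * u ^ 2 - 2 * u + 1 = 0) :
    Irrational (θ / Real.pi) := by
  by_contra hirr
  rw [Irrational] at hirr
  push_neg at hirr
  obtain ⟨q, hq⟩ := hirr
  have hpi : (Real.pi : ℝ) ≠ 0 := Real.pi_ne_zero
  have hθ : θ = (q : ℝ) * Real.pi := by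
    field_simp at hq; linarith [hq]
  -- the point on the unit circle
  set z : ℂ := Complex.exp ((θ : ℂ) * Complex.I) with hz
  set e : ℂ := Complex.exp (((θ/2 : ℝ) : ℂ) * Complex.I) with he
  have hene : e ≠ 0 := Complex.exp_ne_zero _
  have he2 : e ^ 2 = z := by
    rw [he, hz, ← Complex.exp_nat_mul]
    congr 1
    push_cast
    ring
  -- z ≠ 1
  have hz1 : z ≠ 1 := by
    intro h1
    rw [hz, Complex.exp_eq_one_iff] at h1
    obtain ⟨k, hk⟩ := h1
    have hθk : (θ : ℂ) = (k : ℂ) * (2 * Real.pi) := by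
      have := mul_right_cancel₀ Complex.I_ne_zero (by rw [hk]; ring : (θ : ℂ) * Complex.I = ((k : ℂ) * (2 * Real.pi)) * Complex.I)
      exact this
    have hθk' : θ = (k : ℝ) * (2 * Real.pi) := by exact_mod_cast hθk
    apply hs
    have : θ / 2 = (k : ℝ) * Real.pi := by rw [hθk']; ring
    rw [this]
    exact Real.sin_int_mul_pi k
  -- finite order
  have hfin : IsOfFinOrder z := by
    rw [isOfFinOrder_iff_pow_eq_one]
    refine ⟨2 * q.den, by positivity, ?_⟩
    rw [hz, ← Complex.exp_nat_mul]
    have hc : ((q.den : ℂ)) * ((q : ℝ) : ℂ) = ((q.num : ℂ)) := by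
      exact_mod_cast q.den_mul_eq_num
    have hqd : ((2 * q.den : ℕ) : ℂ) * ((θ : ℂ) * Complex.I) = (q.num : ℂ) * (2 * Real.pi * Complex.I) := by
      rw [hθ]
      push_cast
      push_cast at hc
      linear_combination (2 * (Real.pi : ℂ) * Complex.I) * hc
    rw [hqd, Complex.exp_int_mul_two_pi_mul_I]
  -- the cotangent as a complex number
  set v : ℂ := ((u : ℝ) : ℂ) with hv
  have husc : u * Real.sin (θ/2) = Real.cos (θ/2) := by
    rw [hu]; field_simp
  set x : ℂ := ((θ/2 : ℝ) : ℂ) with hx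
  have hvsc : v * Complex.sin x = Complex.cos x := by
    rw [hx, ← Complex.ofReal_sin, ← Complex.ofReal_cos, hv]
    exact_mod_cast congrArg (fun t : ℝ => (t : ℂ)) husc
  have hsin : Complex.sin x = (e⁻¹ - e) * Complex.I / 2 := by
    rw [Complex.sin, he, show -x * Complex.I = -(x * Complex.I) by ring, Complex.exp_neg]
  have hcos : Complex.cos x = (e + e⁻¹) / 2 := by
    rw [Complex.cos, he, show -x * Complex.I = -(x * Complex.I) by ring, Complex.exp_neg]
  have h5 : v * ((e⁻¹ - e) * Complex.I / 2) = (e + e⁻¹) / 2 := by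
    rw [← hsin, ← hcos]; exact hvsc
  field_simp at h5
  have hkey : (v - Complex.I) * z = v + Complex.I := by
    rw [← he2]
    linear_combination Complex.I * h5 + v * (e ^ 2 - 1) * Complex.I_sq
  -- basic nonvanishing
  have hvI : v - Complex.I ≠ 0 := by
    intro h
    have := congrArg Complex.im h
    simp [hv] at this
  have hz1' : z - 1 ≠ 0 := sub_ne_zero.mpr hz1
  have hzformula : z = (v + Complex.I) * (v - Complex.I)⁻¹ := by
    rw [eq_mul_inv_iff_mul_eq₀ hvI]
    linear_combination hkey
  have hvformula : v = (Complex.I * z + Complex.I) * (z - 1)⁻¹ := by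
    rw [eq_mul_inv_iff_mul_eq₀ hz1']
    linear_combination hkey
  -- order of z
  set n : ℕ := orderOf z with hn
  have hnpos : 0 < n := hfin.orderOf_pos
  have hprim : IsPrimitiveRoot z n := IsPrimitiveRoot.orderOf z
  have hzn : z ^ n = 1 := hprim.pow_eq_one
  have hzint : IsIntegral ℚ z :=
    ⟨X ^ n - C 1, monic_X_pow_sub_C (1 : ℚ) hnpos.ne',
      by simp [eval₂_sub, eval₂_pow, eval₂_X, eval₂_C, hzn]⟩
  -- v is a root of the cubic
  have hgv : Polynomial.aeval v gcub = 0 := by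
    rw [gcub_eval]
    have hvr : 2 * v ^ 3 - 3 * v ^ 2 - 2 * v + 1 = 0 := by
      rw [hv]
      push_cast
      exact_mod_cast congrArg (fun t : ℝ => (t : ℂ)) hroot
    linear_combination (1/2 : ℂ) * hvr
  have hvint : IsIntegral ℚ v := ⟨gcub, gcub_monic, by simpa [Polynomial.aeval_def] using hgv⟩
  have hminv : minpoly ℚ v = gcub := (minpoly.eq_of_irreducible_of_monic gcub_irred hgv gcub_monic).symm
  -- the field L = Q(v, i)
  set L : IntermediateField ℚ ℂ := IntermediateField.adjoin ℚ ({v, Complex.I} : Set ℂ) with hL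
  have hvL : v ∈ L := IntermediateField.subset_adjoin _ _ (by simp)
  have hIL : Complex.I ∈ L := IntermediateField.subset_adjoin _ _ (by simp)
  have hzL : z ∈ L := by
    rw [hzformula]
    exact mul_mem (add_mem hvL hIL) (inv_mem (sub_mem hvL hIL))
  set Qv : IntermediateField ℚ ℂ := IntermediateField.adjoin ℚ {v} with hQv
  have hQvL : Qv ≤ L := by
    rw [hQv]
    exact IntermediateField.adjoin_le_iff.mpr (by simpa using hvL)
  have hQvfinrank : Module.finrank ℚ Qv = 3 := by
    rw [hQv]
    rw [IntermediateField.adjoin.finrank hvint, hminv, gcub_natDegree]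
  -- Qv is real
  have hQvreal : Qv ≤ realIF := by
    rw [hQv]
    exact IntermediateField.adjoin_le_iff.mpr (by simpa [hv] using ofReal_mem_realIF u)
  -- minpoly of I over Qv
  have hXsq_monic : (X ^ 2 + C 1 : Polynomial Qv).Monic := monic_X_pow_add_C _ (by norm_num)
  have hXsq_deg : (X ^ 2 + C 1 : Polynomial Qv).natDegree = 2 := natDegree_X_pow_add_C
  have hIQv_int : IsIntegral Qv Complex.I :=
    ⟨X ^ 2 + C 1, hXsq_monic, by simp [eval₂_add, eval₂_pow, eval₂_X, eval₂_C, Complex.I_sq]⟩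
  have haevv : (Polynomial.aeval Complex.I) (X ^ 2 + C (1 : Qv)) = 0 := by
    rw [map_add, map_pow, aeval_X, aeval_C, map_one, Complex.I_sq]; ring
  have hminI : minpoly Qv Complex.I = X ^ 2 + C 1 := by
    refine (minpoly.eq_of_irreducible_of_monic ?_ haevv hXsq_monic).symm
    rw [hXsq_monic.irreducible_iff_roots_eq_zero_of_degree_le_three
      (by rw [hXsq_deg]) (by rw [hXsq_deg]; norm_num)]
    by_contra hne
    obtain ⟨y, hy⟩ := Multiset.exists_mem_of_ne_zero hne
    rw [mem_roots hXsq_monic.ne_zero] at hy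
    have h0 : y ^ 2 + 1 = 0 := by simpa using hy
    have h0' : (y : ℂ) ^ 2 + 1 = 0 := by
      have := congrArg (algebraMap Qv ℂ) h0
      push_cast at this
      simpa using this
    obtain ⟨w, hw⟩ := mem_realIF (hQvreal y.2)
    rw [← hw] at h0'
    have : (w : ℝ) ^ 2 + 1 = 0 := by exact_mod_cast h0'
    nlinarith [sq_nonneg w]
  -- [L : Qv] = 2
  have hextv : IntermediateField.extendScalars hQvL =
      IntermediateField.adjoin Qv ({v, Complex.I} : Set ℂ) :=
    IntermediateField.extendScalars_adjoin hQvL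
  have hadjv : IntermediateField.adjoin Qv ({v, Complex.I} : Set ℂ) =
      IntermediateField.adjoin Qv {Complex.I} := by
    apply le_antisymm
    · apply IntermediateField.adjoin_le_iff.mpr
      intro y hy
      simp only [Set.mem_insert_iff, Set.mem_singleton_iff] at hy
      rcases hy with h | h <;> rw [h]
      · exact (IntermediateField.adjoin Qv {Complex.I}).algebraMap_mem
          ⟨v, IntermediateField.mem_adjoin_simple_self ℚ v⟩
      · exact IntermediateField.subset_adjoin _ _ (by simp)
    · exact IntermediateField.adjoin.mono _ _ _ (by simp)
  have hrelv : IntermediateField.relfinrank Qv L = 2 := by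
    rw [IntermediateField.relfinrank_eq_finrank_of_le hQvL, hextv, hadjv,
      IntermediateField.adjoin.finrank hIQv_int, hminI, hXsq_deg]
  have hLfinrank : Module.finrank ℚ L = 6 := by
    rw [← IntermediateField.finrank_bot_mul_relfinrank hQvL, hQvfinrank, hrelv]
  -- the field Q(z)
  set Qz : IntermediateField ℚ ℂ := IntermediateField.adjoin ℚ {z} with hQz
  have hQzL : Qz ≤ L := by
    rw [hQz]
    exact IntermediateField.adjoin_le_iff.mpr (by simpa using hzL)
  have hQztot : Module.finrank ℚ Qz = n.totient := by
    rw [hQz, IntermediateField.adjoin.finrank hzint,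
      ← Polynomial.cyclotomic_eq_minpoly_rat hprim hnpos, Polynomial.natDegree_cyclotomic]
  have hextz : IntermediateField.extendScalars hQzL =
      IntermediateField.adjoin Qz ({v, Complex.I} : Set ℂ) :=
    IntermediateField.extendScalars_adjoin hQzL
  have hzQz : z ∈ IntermediateField.adjoin Qz {Complex.I} :=
    (IntermediateField.adjoin Qz {Complex.I}).algebraMap_mem
      ⟨z, IntermediateField.mem_adjoin_simple_self ℚ z⟩
  have hadjz : IntermediateField.adjoin Qz ({v, Complex.I} : Set ℂ) =
      IntermediateField.adjoin Qz {Complex.I} := by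
    apply le_antisymm
    · apply IntermediateField.adjoin_le_iff.mpr
      intro y hy
      simp only [Set.mem_insert_iff, Set.mem_singleton_iff] at hy
      rcases hy with h | h <;> rw [h]
      · rw [hvformula]
        exact mul_mem (add_mem (mul_mem (IntermediateField.subset_adjoin _ _ (by simp)) hzQz)
          (IntermediateField.subset_adjoin _ _ (by simp)))
          (inv_mem (sub_mem hzQz (one_mem _)))
      · exact IntermediateField.subset_adjoin _ _ (by simp)
    · exact IntermediateField.adjoin.mono _ _ _ (by simp)
  have hXz_monic : (X ^ 2 + C 1 : Polynomial Qz).Monic := monic_X_pow_add_C _ (by norm_num)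
  have hIQz_int : IsIntegral Qz Complex.I :=
    ⟨X ^ 2 + C 1, hXz_monic, by simp [eval₂_add, eval₂_pow, eval₂_X, eval₂_C, Complex.I_sq]⟩
  have hrelz_le : IntermediateField.relfinrank Qz L ≤ 2 := by
    rw [IntermediateField.relfinrank_eq_finrank_of_le hQzL, hextz, hadjz,
      IntermediateField.adjoin.finrank hIQz_int]
    have hdvd : minpoly Qz Complex.I ∣ (X ^ 2 + C 1 : Polynomial Qz) :=
      minpoly.dvd _ _ (by
        rw [map_add, map_pow, aeval_X, aeval_C, map_one, Complex.I_sq]; ring)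
    calc (minpoly Qz Complex.I).natDegree
        ≤ (X ^ 2 + C 1 : Polynomial Qz).natDegree :=
          Polynomial.natDegree_le_of_dvd hdvd hXz_monic.ne_zero
      _ = 2 := natDegree_X_pow_add_C
  have hmulz : n.totient * IntermediateField.relfinrank Qz L = 6 := by
    rw [← hQztot, IntermediateField.finrank_bot_mul_relfinrank hQzL, hLfinrank]
  -- totient n must be 6 and I ∈ Qz
  have htot_ne3 : n.totient ≠ 3 := by
    rcases lt_or_ge 2 n with h | h
    · intro hh
      have := Nat.totient_even h
      rw [hh] at this
      exact (by decide : ¬ Even 3) this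
    · intro hh
      have h12 : n = 1 ∨ n = 2 := by omega
      rcases h12 with h1 | h1 <;> rw [h1] at hh <;>
        simp [Nat.totient_one, Nat.totient_two] at hh
  have hrel1 : IntermediateField.relfinrank Qz L = 1 ∧ n.totient = 6 := by
    have h02 : IntermediateField.relfinrank Qz L = 0 ∨ IntermediateField.relfinrank Qz L = 1 ∨
        IntermediateField.relfinrank Qz L = 2 := by omega
    rcases h02 with h | h | h
    · rw [h, mul_zero] at hmulz; omega
    · rw [h, mul_one] at hmulz; exact ⟨h, hmulz⟩
    · rw [h] at hmulz
      exact absurd (by omega : n.totient = 3) htot_ne3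
  have htot6 : n.totient = 6 := hrel1.2
  have hIQz : Complex.I ∈ Qz := by
    have h1 : IntermediateField.adjoin Qz ({Complex.I} : Set ℂ) = ⊥ := by
      rw [← IntermediateField.finrank_eq_one_iff]
      have := hrel1.1
      rw [IntermediateField.relfinrank_eq_finrank_of_le hQzL, hextz, hadjz] at this
      exact this
    have h2 : Complex.I ∈ IntermediateField.adjoin Qz ({Complex.I} : Set ℂ) :=
      IntermediateField.subset_adjoin _ _ (by simp)
    rw [h1, IntermediateField.mem_bot] at h2
    obtain ⟨y, hy⟩ := h2
    rw [← hy]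
    exact y.2
  -- final number-theoretic contradiction
  have horderI : orderOf Complex.I = 4 := by
    rw [orderOf_eq_iff (by norm_num)]
    constructor
    · norm_num [pow_succ, Complex.ext_iff]
    · intro m hm hmpos
      interval_cases m <;> norm_num [pow_succ, Complex.ext_iff]
  -- helper : from an element of Qz of odd order t with φ(t) = 6, get a contradiction
  have hfinal : ∀ t : ℕ, ∀ y : ℂ, y ∈ Qz → orderOf y = t → Odd t → t.totient = 6 → False := by
    intro t y hyQz hyt ht htot
    have htpos : 0 < t := by
      rcases Nat.eq_zero_or_pos t with h0 | h; · simp [h0] at htot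
      exact h
    have hcop : Nat.Coprime t 4 := by
      have h2 : Nat.Coprime t 2 :=
        ((Nat.prime_two.coprime_iff_not_dvd).mpr (by
          have := Nat.odd_iff.mp ht
          omega)).symm
      have := h2.pow_right 2
      norm_num at this
      exact this
    set w : ℂ := y * Complex.I with hw
    have hwQz : w ∈ Qz := mul_mem hyQz hIQz
    have hworder : orderOf w = t * 4 := by
      rw [hw, (Commute.all y Complex.I).orderOf_mul_eq_mul_orderOf_of_coprime
        (by rw [hyt, horderI]; exact hcop), hyt, horderI]
    have hwpos : 0 < orderOf w := by rw [hworder]; positivity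
    have hprimw : IsPrimitiveRoot w (orderOf w) := IsPrimitiveRoot.orderOf w
    have hwn : w ^ (orderOf w) = 1 := hprimw.pow_eq_one
    have hwint : IsIntegral ℚ w :=
      ⟨X ^ (orderOf w) - C 1, monic_X_pow_sub_C (1 : ℚ) hwpos.ne',
        by simp [eval₂_sub, eval₂_pow, eval₂_X, eval₂_C, hwn]⟩
    have hQwtot : Module.finrank ℚ (IntermediateField.adjoin ℚ ({w} : Set ℂ)) = 12 := by
      rw [IntermediateField.adjoin.finrank hwint,
        ← Polynomial.cyclotomic_eq_minpoly_rat hprimw hwpos, Polynomial.natDegree_cyclotomic,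
        hworder, Nat.totient_mul hcop, htot]
      decide
    have hQwQz : IntermediateField.adjoin ℚ ({w} : Set ℂ) ≤ Qz :=
      IntermediateField.adjoin_le_iff.mpr (by simpa using hwQz)
    have := IntermediateField.finrank_bot_mul_relfinrank hQwQz
    rw [hQwtot, hQztot, htot6] at this
    omega
  by_cases h4 : (4 : ℕ) ∣ n
  · -- 4 ∣ n : impossible since φ(n) = 6
    obtain ⟨k, hk⟩ := h4
    have hm : n = 2 * (2 * k) := by omega
    have h2dvd : (2 : ℕ) ∣ 2 * k := ⟨k, rfl⟩
    have := Nat.totient_mul_of_prime_of_dvd Nat.prime_two h2dvd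
    rw [← hm, htot6] at this
    have hphi : Nat.totient (2 * k) = 3 := by omega
    rcases lt_or_ge 2 (2 * k) with hlt | hle
    · have := Nat.totient_even hlt
      rw [hphi] at this
      exact (by decide : ¬ Even 3) this
    · have hk01 : k = 0 ∨ k = 1 := by omega
      rcases hk01 with h1 | h1 <;> subst h1 <;>
        simp [Nat.totient_two] at hphi
  · rcases Nat.even_or_odd n with hev | hod
    · -- n = 2m with m odd
      obtain ⟨m, hm⟩ := hev
      have hmodd : Odd m := by
        rcases Nat.even_or_odd m with h | h
        · exfalso; apply h4; obtain ⟨j, hj⟩ := h; omega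
        · exact h
      have hmz : orderOf (z ^ 2) = m := by
        rw [orderOf_pow' (x := z) (by norm_num : (2:ℕ) ≠ 0), ← hn,
          Nat.gcd_comm, Nat.gcd_eq_left ⟨m, by omega⟩]
        omega
      have hcop2m : Nat.Coprime 2 m :=
        (Nat.prime_two.coprime_iff_not_dvd).mpr (by
          have := Nat.odd_iff.mp hmodd
          omega)
      have hphim : m.totient = 6 := by
        have := Nat.totient_mul hcop2m
        rw [show 2 * m = n by omega, htot6, Nat.totient_two, one_mul] at this
        omega
      exact hfinal m (z ^ 2) (pow_mem (IntermediateField.mem_adjoin_simple_self ℚ z) 2)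
        hmz hmodd hphim
    · -- n odd
      have : n.totient = 6 := htot6
      exact hfinal n z (IntermediateField.mem_adjoin_simple_self ℚ z) rfl hod htot6
end

section
/- The polynomial 2X³ − 3X² − 2X + 1 with rational coefficients is irreducible over ℚ, and the Galois group of its splitting field over ℚ is not commutative. -/
open Polynomial

noncomputable def P : ℚ[X] := 2 * X ^ 3 - 3 * X ^ 2 - 2 * X + 1

lemma P_natDegree : P.natDegree = 3 := by unfold P; compute_degree!

lemma P_ne_zero : P ≠ 0 := fun h0 => by simpa [h0] using P_natDegree

lemma int_lemma (n d : ℤ) (hdpos : 0 < d) (hcop : IsCoprime n d)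
    (key : 2*n^3 - 3*n^2*d - 2*n*d^2 + d^3 = 0) : False := by
  have hdvd_d : d ∣ 2 * n ^ 3 := ⟨3*n^2 + 2*n*d - d^2, by linarith [key]⟩
  have hd2 : d ∣ 2 := (hcop.symm.pow_right (n := 3)).dvd_of_dvd_mul_right hdvd_d
  have hdvd_n : n ∣ d ^ 3 := ⟨-(2*n^2 - 3*n*d - 2*d^2), by linarith [key]⟩
  have hn1 : IsUnit n := (hcop.pow_right (n := 3)).isUnit_of_dvd hdvd_n
  have hdle : d ≤ 2 := Int.le_of_dvd (by norm_num) hd2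
  interval_cases d <;> rcases Int.isUnit_iff.mp hn1 with h | h <;> rw [h] at key <;>
    norm_num at key

lemma P_noroot (t : ℚ) : ¬ P.IsRoot t := by
  intro h
  have ht : 2*t^3 - 3*t^2 - 2*t + 1 = 0 := by
    simpa [P, IsRoot] using h
  have hd0 : ((t.den : ℤ) : ℚ) ≠ 0 := by positivity
  have ht' : t = (t.num : ℚ) / ((t.den : ℤ) : ℚ) := by exact_mod_cast (Rat.num_div_den t).symm
  rw [ht'] at ht
  field_simp at ht
  have keyQ : ((2*t.num^3 - 3*t.num^2*(t.den:ℤ) - 2*t.num*(t.den:ℤ)^2 + (t.den:ℤ)^3 : ℤ) : ℚ)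
      * ((t.den : ℤ) : ℚ)^3 = 0 := by
    push_cast at ht ⊢
    linear_combination (t.den:ℚ)^3 * ht
  have key : 2*t.num^3 - 3*t.num^2*(t.den:ℤ) - 2*t.num*(t.den:ℤ)^2 + (t.den:ℤ)^3 = 0 := by
    rcases mul_eq_zero.mp keyQ with h1 | h2
    · exact_mod_cast h1
    · exact absurd h2 (pow_ne_zero 3 hd0)
  exact int_lemma t.num t.den (by exact_mod_cast t.pos) 
    (Int.isCoprime_iff_gcd_eq_one.mpr t.reduced) key

lemma P_irr : Irreducible P := by
  rw [irreducible_iff_roots_eq_zero_of_degree_le_three (by norm_num [P_natDegree])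
    (by norm_num [P_natDegree])]
  by_contra hr
  obtain ⟨t, htm⟩ := Multiset.exists_mem_of_ne_zero hr
  exact P_noroot t ((mem_roots P_ne_zero).mp htm)

lemma rat_sq_ne_79 (r : ℚ) : r^2 ≠ 79 := by
  intro hr
  have h79 : Irrational (Real.sqrt 79) := by
    have : Nat.Prime 79 := by norm_num
    simpa using this.irrational_sqrt
  apply h79
  refine ⟨|r|, ?_⟩
  have h1 : ((|r| : ℚ) : ℝ)^2 = 79 := by
    have h2 : (|r|)^2 = (79:ℚ) := by rw [sq_abs]; exact hr
    exact_mod_cast h2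
  rw [← h1, Real.sqrt_sq (by positivity)]

noncomputable abbrev f' : ℚ →+* P.SplittingField := algebraMap ℚ P.SplittingField

lemma P_gal : ¬ ∀ σ τ : P.Gal, σ * τ = τ * σ := by
  classical
  intro hab
  have hsplits : (P.map f').Splits := SplittingField.splits P
  haveI : Fact ((P.map (algebraMap ℚ P.SplittingField)).Splits) := ⟨hsplits⟩
  have hcard3 : (P.map f').roots.card = 3 := by
    rw [← hsplits.natDegree_eq_card_roots, natDegree_map, P_natDegree]
  obtain ⟨r1, r2, r3, hr⟩ := Multiset.card_eq_three.mp hcard3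
  have hlc : P.leadingCoeff = 2 := by
    rw [leadingCoeff, P_natDegree, P]
    compute_degree <;> norm_num
  have hfact : P.map f' = C (f' 2) * ((X - C r1) * ((X - C r2) * (X - C r3))) := by
    have h := hsplits.eq_prod_roots
    rw [hr, leadingCoeff_map, hlc] at h
    simpa [Multiset.prod_cons, mul_assoc] using h
  have heval : ∀ q : ℚ, f' (P.eval q) = f' 2 * ((f' q - r1) * ((f' q - r2) * (f' q - r3))) := by
    intro q
    have h := congrArg (eval (f' q)) hfact
    rw [eval_map, eval₂_at_apply] at h
    simpa using h
  have he0 := heval 0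
  have he1 := heval 1
  have he2 := heval (-1)
  norm_num [P] at he0 he1 he2
  have ha : r1 + r2 + r3 = 3/2 := by
    linear_combination (-1/2 : P.SplittingField) * he0 + (1/4 : P.SplittingField) * he1
      + (1/4 : P.SplittingField) * he2
  have hb : r1*r2 + r1*r3 + r2*r3 = -1 := by
    linear_combination (-1/4 : P.SplittingField) * he1 + (1/4 : P.SplittingField) * he2
  have hc : r1*r2*r3 = -1/2 := by
    linear_combination (1/2 : P.SplittingField) * he0
  have hdelta : ((r1-r2)*((r1-r3)*(r2-r3)))^2 = (79 : P.SplittingField)/4 := by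
    linear_combination
      (-4*(r1*r2*r3)*((r1+r2+r3)^2+(3/2)*(r1+r2+r3)+9/4)
        + (r1*r2+r1*r3+r2*r3)^2*((r1+r2+r3)+3/2)
        + 18*(r1*r2+r1*r3+r2*r3)*(r1*r2*r3)) * ha
      + (-4*((r1*r2+r1*r3+r2*r3)^2 - (r1*r2+r1*r3+r2*r3) + 1)
        + (9/4)*((r1*r2+r1*r3+r2*r3)-1) + 27*(r1*r2*r3)) * hb
      + (-27*((r1*r2*r3)+1)) * hc
  set δ := (r1-r2)*((r1-r3)*(r2-r3)) with hδdef
  have hδ0 : δ ≠ 0 := by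
    intro h
    rw [h] at hdelta
    norm_num at hdelta
  have h12 : r1 ≠ r2 := by intro h; apply hδ0; rw [hδdef, h]; ring
  have h13 : r1 ≠ r3 := by intro h; apply hδ0; rw [hδdef, h]; ring
  have h23 : r2 ≠ r3 := by intro h; apply hδ0; rw [hδdef, h]; ring
  have hsep : P.Separable := P_irr.separable
  have hcardroot : Fintype.card (P.rootSet P.SplittingField) = 3 := by
    rw [card_rootSet_eq_natDegree hsep hsplits, P_natDegree]
  have hinj := Polynomial.Gal.galActionHom_injective P P.SplittingField
  have hcardle : Fintype.card P.Gal ≤ 6 := by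
    have := Fintype.card_le_of_injective _ hinj
    rwa [Fintype.card_perm, hcardroot] at this
  have hdvd : 3 ∣ Fintype.card P.Gal := by
    have h3 : P.natDegree.Prime := by rw [P_natDegree]; norm_num
    have := Polynomial.Gal.prime_degree_dvd_card P_irr h3
    rwa [P_natDegree, Nat.card_eq_fintype_card] at this
  have hpos : 0 < Fintype.card P.Gal := Fintype.card_pos
  have hmem3 : ∀ x ∈ ({r1, r2, r3} : Multiset P.SplittingField), x ∈ P.rootSet P.SplittingField := by
    intro x hx
    have hx' : x ∈ (P.map f').roots := by rw [hr]; exact hx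
    rw [mem_rootSet]
    refine ⟨P_ne_zero, ?_⟩
    have := (mem_roots (Polynomial.map_ne_zero P_ne_zero)).mp hx'
    rwa [IsRoot, eval_map] at this
  have hcard3' : Fintype.card P.Gal = 3 := by
    rcases (by omega : Fintype.card P.Gal = 3 ∨ Fintype.card P.Gal = 6) with h | h6
    · exact h
    · exfalso
      have hbij : Function.Bijective (Polynomial.Gal.galActionHom P P.SplittingField) :=
        (Fintype.bijective_iff_injective_and_card _).2
          ⟨hinj, by rw [h6, Fintype.card_perm, hcardroot]; norm_num [Nat.factorial]⟩
      set a : P.rootSet P.SplittingField := ⟨r1, hmem3 r1 (by simp)⟩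
      set b : P.rootSet P.SplittingField := ⟨r2, hmem3 r2 (by simp)⟩
      set c : P.rootSet P.SplittingField := ⟨r3, hmem3 r3 (by simp)⟩
      have hab' : a ≠ b := fun h => h12 (congrArg Subtype.val h)
      have hac' : a ≠ c := fun h => h13 (congrArg Subtype.val h)
      have hbc' : b ≠ c := fun h => h23 (congrArg Subtype.val h)
      obtain ⟨σ, hσ⟩ := hbij.2 (Equiv.swap a b)
      obtain ⟨τ, hτ⟩ := hbij.2 (Equiv.swap b c)
      have hcomm := congrArg (Polynomial.Gal.galActionHom P P.SplittingField) (hab σ τ)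
      rw [map_mul, map_mul, hσ, hτ] at hcomm
      have := congrArg (fun π : Equiv.Perm (P.rootSet P.SplittingField) => π a) hcomm
      simp only [Equiv.Perm.mul_apply] at this
      rw [Equiv.swap_apply_of_ne_of_ne hab' hac', Equiv.swap_apply_left,
        Equiv.swap_apply_left] at this
      exact hbc' this
  have hfix : ∀ σ : P.Gal, σ δ = δ := by
    intro σ
    have hsq : (σ δ)^2 = δ^2 := by
      have h1 : σ (δ^2) = (σ δ)^2 := map_pow σ δ 2
      have h2 : σ (δ^2) = δ^2 := by
        rw [hdelta]
        have h3 : ((79 : P.SplittingField)/4) = f' (79/4) := by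
          simp [map_div₀]
        rw [h3]
        exact σ.commutes _
      rw [← h1, h2]
    have hfac : (σ δ - δ) * (σ δ + δ) = 0 := by linear_combination hsq
    rcases mul_eq_zero.mp hfac with h | h
    · exact sub_eq_zero.mp h
    · exfalso
      have hneg : σ δ = -δ := eq_neg_of_add_eq_zero_left h
      have hord : σ ^ 3 = 1 := by
        rw [← hcard3']
        exact pow_card_eq_one
      have e1 : (σ ^ 3) δ = -δ := by
        have : (σ ^ 3) δ = σ (σ (σ δ)) := by
          rw [pow_succ, pow_succ, pow_one]
          rfl
        simp only [this, hneg, map_neg, neg_neg]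
      rw [hord] at e1; change δ = -δ at e1
      have h2δ : (2 : P.SplittingField) * δ = 0 := by linear_combination e1
      rcases mul_eq_zero.mp h2δ with h' | h'
      · exact two_ne_zero h'
      · exact hδ0 h'
  haveI : IsGalois ℚ P.SplittingField := @IsGalois.of_separable_splitting_field ℚ _ P.SplittingField _ _ P (Polynomial.IsSplittingField.splittingField P) hsep
  have hgal : IsGalois ℚ P.SplittingField := inferInstance
  have hbot : IntermediateField.fixedField (⊤ : Subgroup P.Gal) = ⊥ :=
    ((IsGalois.tfae (F := ℚ) (E := P.SplittingField)).out 0 1).mp hgal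
  have hmemfix : δ ∈ IntermediateField.fixedField (⊤ : Subgroup P.Gal) := fun g => hfix g.1
  rw [hbot, IntermediateField.mem_bot] at hmemfix
  obtain ⟨q, hq⟩ := hmemfix
  have hq2 : q ^ 2 = 79 / 4 := by
    apply (algebraMap ℚ P.SplittingField).injective
    rw [map_pow]
    show f' q ^ 2 = f' (79/4)
    rw [show f' q = δ from hq, hdelta]
    simp [map_div₀]
  exact rat_sq_ne_79 (2 * q) (by linear_combination 4 * hq2)

open Polynomial in
/-- The polynomial `2X³ − 3X² − 2X + 1 ∈ ℚ[X]` is irreducible and the Galois group of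
its splitting field over ℚ is not commutative. -/
theorem cubic_irreducible_nonabelian_gal :
    Irreducible (2 * X ^ 3 - 3 * X ^ 2 - 2 * X + 1 : ℚ[X]) ∧
    ¬ ∀ σ τ : (2 * X ^ 3 - 3 * X ^ 2 - 2 * X + 1 : ℚ[X]).Gal, σ * τ = τ * σ := by
  exact ⟨P_irr, P_gal⟩
end

section
/- Let n be a positive integer, ν a prime element of the Gaussian integers ℤ[i] with Nm(ν) = n, and r, s, λ integers such that λ² + rλ + s ≡ 0 (mod n), 4s − r² > 0, and 4s − r² is not a perfect square. Let (z₁, z₂) ∈ ℤ[i] × ℤ[i] with (z₁, z₂) ≠ (0, 0) and ν dividing z₁ + λ·z₂ in ℤ[i]. Then (1 + |r| + s)² · (max(Nm(z₁), Nm(z₂)))² ≥ n; equivalently, max(|z₁|, |z₂|) ≥ √(Nm ν)^{1/2} / √(1 + |r| + s) = n^{1/4}/√(1+|r|+s). -/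
/-- Lemma 6 of the paper (lower bound on generic vectors of `ker F`): if `ν` is a
Gaussian prime of norm `n`, `λ² + rλ + s ≡ 0 (mod n)`, `X² + rX + s` is irreducible over
`ℚ(i)` (encoded by `4s − r² > 0` not a perfect square), and `(z₁, z₂) ≠ (0,0)` satisfies
`ν ∣ z₁ + λz₂` in `ℤ[i]`, then `(1 + |r| + s)²·max(Nm z₁, Nm z₂)² ≥ n`, i.e.
`max(|z₁|, |z₂|) ≥ n^(1/4)/√(1 + |r| + s)`. -/
theorem glv_kernel_vector_lower_bound (n : ℕ) (hn : 0 < n)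
    (ν : Zsqrtd (-1)) (hν : Prime ν) (hnorm : Zsqrtd.norm ν = (n : ℤ))
    (r s lam : ℤ)
    (hlam : (n : ℤ) ∣ lam ^ 2 + r * lam + s)
    (hpos : 0 < 4 * s - r ^ 2) (hnsq : ¬ IsSquare (4 * s - r ^ 2))
    (z₁ z₂ : Zsqrtd (-1)) (hz : ¬ (z₁ = 0 ∧ z₂ = 0))
    (hdvd : ν ∣ z₁ + (lam : Zsqrtd (-1)) * z₂) :
    (n : ℤ) ≤ (1 + |r| + s) ^ 2 * (max (Zsqrtd.norm z₁) (Zsqrtd.norm z₂)) ^ 2 := by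
  set k : ℤ := 4 * s - r ^ 2 with hk
  have hs : 0 < s := by nlinarith [sq_nonneg r]
  -- the auxiliary element
  set w : Zsqrtd (-1) := z₁ * z₁ - (r : Zsqrtd (-1)) * z₁ * z₂ + (s : Zsqrtd (-1)) * z₂ * z₂
    with hw
  -- ν divides w
  have hνn : ν ∣ ((n : ℤ) : Zsqrtd (-1)) := by
    rw [← hnorm, Zsqrtd.norm_eq_mul_conj]
    exact Dvd.intro _ rfl
  have hνw : ν ∣ w := by
    have h1 : ν ∣ ((lam ^ 2 + r * lam + s : ℤ) : Zsqrtd (-1)) :=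
      hνn.trans (map_dvd (Int.castRingHom (Zsqrtd (-1))) hlam)
    have key : w = (z₁ + (lam : Zsqrtd (-1)) * z₂) *
        (z₁ - ((r + lam : ℤ) : Zsqrtd (-1)) * z₂) +
        ((lam ^ 2 + r * lam + s : ℤ) : Zsqrtd (-1)) * z₂ * z₂ := by
      push_cast
      ring
    rw [key]
    exact dvd_add (hdvd.mul_right _) ((h1.mul_right _).mul_right _)
  -- w ≠ 0
  have hwne : w ≠ 0 := by
    intro hw0
    -- 4w = (2z₁ - r z₂)² + k z₂²
    set u : Zsqrtd (-1) := 2 * z₁ - (r : Zsqrtd (-1)) * z₂ with hu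
    have h4 : u ^ 2 = -((k : Zsqrtd (-1)) * z₂ ^ 2) := by
      have : (4 : Zsqrtd (-1)) * w = u ^ 2 + (k : Zsqrtd (-1)) * z₂ ^ 2 := by
        rw [hw, hu, hk]; push_cast; ring
      rw [hw0, mul_zero] at this
      linear_combination -this
    by_cases hz₂ : z₂ = 0
    · have hz₁ : z₁ = 0 := by
        have : u ^ 2 = 0 := by rw [h4, hz₂]; ring
        have hu0 : u = 0 := by
          exact (pow_eq_zero_iff two_ne_zero).mp this
        have : (2 : Zsqrtd (-1)) * z₁ = 0 := by
          rw [hu, hz₂] at hu0; simpa using hu0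
        have h2 : (2 : Zsqrtd (-1)) ≠ 0 := by decide
        exact (mul_eq_zero.mp this).resolve_left h2
      exact hz ⟨hz₁, hz₂⟩
    · -- v = i * z₂
      set v : Zsqrtd (-1) := ⟨0, 1⟩ * z₂ with hv
      have hvsq : v ^ 2 = -(z₂ ^ 2) := by
        have : (⟨0, 1⟩ : Zsqrtd (-1)) ^ 2 = -1 := by decide
        rw [hv, mul_pow, this]; ring
      have huv : u ^ 2 = (k : Zsqrtd (-1)) * v ^ 2 := by
        rw [hvsq, h4]; ring
      set w2 : Zsqrtd (-1) := u * star v with hw2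
      have hvne : v ≠ 0 := by
        intro h
        have : (⟨0, 1⟩ : Zsqrtd (-1)) * z₂ = 0 := h
        rcases mul_eq_zero.mp this with h' | h'
        · exact absurd h' (by decide)
        · exact hz₂ h'
      have hNv : 0 < Zsqrtd.norm v := by
        rcases lt_or_eq_of_le (Zsqrtd.norm_nonneg (by norm_num) v) with h | h
        · exact h
        · exact absurd ((Zsqrtd.norm_eq_zero_iff (by norm_num) v).mp h.symm) hvne
      have hw2sq : w2 ^ 2 = ((k * (Zsqrtd.norm v) ^ 2 : ℤ) : Zsqrtd (-1)) := by
        have hcv : ((Zsqrtd.norm v : ℤ) : Zsqrtd (-1)) = v * star v :=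
          Zsqrtd.norm_eq_mul_conj v
        push_cast
        rw [hcv, hw2]
        rw [mul_pow, huv]
        ring
      -- extract components
      have hre : w2.re ^ 2 - w2.im ^ 2 = k * (Zsqrtd.norm v) ^ 2 := by
        have := congrArg Zsqrtd.re hw2sq
        simpa [pow_two, Zsqrtd.re_mul, Zsqrtd.im_mul, sub_eq_add_neg] using this
      have him : w2.re * w2.im + w2.im * w2.re = 0 := by
        have := congrArg Zsqrtd.im hw2sq
        simpa [pow_two, Zsqrtd.re_mul, Zsqrtd.im_mul] using this
      have him' : w2.re = 0 ∨ w2.im = 0 := by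
        rcases mul_eq_zero.mp (by linarith : w2.re * w2.im = 0) with h | h
        · exact Or.inl h
        · exact Or.inr h
      rcases him' with h | h
      · rw [h] at hre
        nlinarith [sq_nonneg w2.im, sq_nonneg (Zsqrtd.norm v), mul_pos hpos (pow_pos hNv 2)]
      · rw [h] at hre
        have hdv : (Zsqrtd.norm v) ^ 2 ∣ w2.re ^ 2 := ⟨k, by linarith⟩
        have hdv' : Zsqrtd.norm v ∣ w2.re := by
          exact (Int.pow_dvd_pow_iff two_ne_zero).mp hdv
        obtain ⟨t, ht⟩ := hdv'
        apply hnsq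
        refine ⟨t, ?_⟩
        have : (Zsqrtd.norm v) ^ 2 * k = (Zsqrtd.norm v) ^ 2 * (t * t) := by
          rw [ht] at hre; ring_nf; ring_nf at hre; nlinarith [hre]
        have := mul_left_cancel₀ (pow_ne_zero 2 (ne_of_gt hNv)) this
        linarith
  -- n ≤ norm w
  have hnw : (n : ℤ) ≤ Zsqrtd.norm w := by
    obtain ⟨c, hc⟩ := hνw
    have hdvd' : (n : ℤ) ∣ Zsqrtd.norm w := by
      rw [hc, Zsqrtd.norm_mul, ← hnorm]
      exact ⟨_, rfl⟩
    have hwpos : 0 < Zsqrtd.norm w := by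
      rcases lt_or_eq_of_le (Zsqrtd.norm_nonneg (by norm_num) w) with h | h
      · exact h
      · exact absurd ((Zsqrtd.norm_eq_zero_iff (by norm_num) w).mp h.symm) hwne
    exact Int.le_of_dvd hwpos hdvd'
  -- norm w ≤ (1+|r|+s)² M²
  set M : ℤ := max (Zsqrtd.norm z₁) (Zsqrtd.norm z₂) with hM
  have hM1 : Zsqrtd.norm z₁ ≤ M := le_max_left _ _
  have hM2 : Zsqrtd.norm z₂ ≤ M := le_max_right _ _
  have hMnn : 0 ≤ M := le_trans (Zsqrtd.norm_nonneg (by norm_num) z₁) hM1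
  have hwM : Zsqrtd.norm w ≤ (1 + |r| + s) ^ 2 * M ^ 2 := by
    -- move to ℂ
    rw [← @Int.cast_le ℝ]
    push_cast
    rw [GaussianInt.intCast_real_norm w]
    have habs : ‖GaussianInt.toComplex w‖ ≤ (1 + |(r : ℝ)| + (s : ℝ)) * (M : ℝ) := by
      set X := ‖GaussianInt.toComplex z₁‖ with hX
      set Y := ‖GaussianInt.toComplex z₂‖ with hY
      have hX2 : X ^ 2 = (Zsqrtd.norm z₁ : ℝ) := by
        rw [hX, Complex.sq_norm, ← GaussianInt.intCast_real_norm]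
      have hY2 : Y ^ 2 = (Zsqrtd.norm z₂ : ℝ) := by
        rw [hY, Complex.sq_norm, ← GaussianInt.intCast_real_norm]
      have hXY : X * Y ≤ (M : ℝ) := by
        rcases le_total X Y with h | h
        · calc X * Y ≤ Y * Y := by
                exact mul_le_mul_of_nonneg_right h (norm_nonneg _)
            _ = Y ^ 2 := by ring
            _ ≤ (M : ℝ) := by rw [hY2]; exact_mod_cast hM2
        · calc X * Y ≤ X * X := by
                exact mul_le_mul_of_nonneg_left h (norm_nonneg _)
            _ = X ^ 2 := by ring
            _ ≤ (M : ℝ) := by rw [hX2]; exact_mod_cast hM1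
      have hwc : GaussianInt.toComplex w =
          (GaussianInt.toComplex z₁) * (GaussianInt.toComplex z₁)
          - (r : ℂ) * (GaussianInt.toComplex z₁) * (GaussianInt.toComplex z₂)
          + (s : ℂ) * (GaussianInt.toComplex z₂) * (GaussianInt.toComplex z₂) := by
        rw [hw]
        push_cast [map_add, map_sub, map_mul, map_intCast]
        ring
      calc ‖GaussianInt.toComplex w‖
          ≤ ‖(GaussianInt.toComplex z₁) * (GaussianInt.toComplex z₁)
              - (r : ℂ) * (GaussianInt.toComplex z₁) * (GaussianInt.toComplex z₂)‖
            + ‖(s : ℂ) * (GaussianInt.toComplex z₂) * (GaussianInt.toComplex z₂)‖ := by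
            rw [hwc]; exact norm_add_le _ _
        _ ≤ ‖(GaussianInt.toComplex z₁) * (GaussianInt.toComplex z₁)‖
            + ‖(r : ℂ) * (GaussianInt.toComplex z₁) * (GaussianInt.toComplex z₂)‖
            + ‖(s : ℂ) * (GaussianInt.toComplex z₂) * (GaussianInt.toComplex z₂)‖ := by
            have := norm_sub_le ((GaussianInt.toComplex z₁) * (GaussianInt.toComplex z₁))
              ((r : ℂ) * (GaussianInt.toComplex z₁) * (GaussianInt.toComplex z₂))
            linarith
        _ = X * X + |(r : ℝ)| * (X * Y) + |(s : ℝ)| * (Y * Y) := by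
            simp [map_mul, Complex.norm_intCast, hX, hY]
            ring
        _ ≤ (M : ℝ) + |(r : ℝ)| * (M : ℝ) + s * (M : ℝ) := by
            have h1 : X * X ≤ (M : ℝ) := by
              have : X * X = X ^ 2 := by ring
              rw [this, hX2]; exact_mod_cast hM1
            have h2 : Y * Y ≤ (M : ℝ) := by
              have : Y * Y = Y ^ 2 := by ring
              rw [this, hY2]; exact_mod_cast hM2
            have hsr : |(s : ℝ)| = (s : ℝ) := abs_of_pos (by exact_mod_cast hs)
            have hrnn : (0 : ℝ) ≤ |(r : ℝ)| := abs_nonneg _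
            rw [hsr]
            have := mul_le_mul_of_nonneg_left hXY hrnn
            have := mul_le_mul_of_nonneg_left h2 (le_of_lt (by exact_mod_cast hs : (0:ℝ) < s))
            linarith
        _ = (1 + |(r : ℝ)| + (s : ℝ)) * (M : ℝ) := by ring
    have h0 : (0 : ℝ) ≤ ‖GaussianInt.toComplex w‖ := norm_nonneg _
    have hsq := mul_self_le_mul_self h0 habs
    rw [← Complex.sq_norm]
    push_cast at hsq ⊢
    nlinarith [hsq]
  linarith
end
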